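/- arXiv:1109.5415 — 7 statements merged into one kernel-verified Lean document; each statement's English description precedes it below -/
import Mathlib

section
/- Optimality of the alias-suppressing prefilter (Theorem 3, integral/capacity form): Let f_s > 0 and P > 0. Let H, S : ℝ → ℂ and 𝒮η : ℝ → ℝ with 𝒮η f > 0 for all f, and set I := Set.Icc (−f_s/2) (f_s/2). For f ∈ I define γ_S(f) := (∑'_{l:ℤ} ‖H(f − l f_s)‖² · ‖S(f − l f_s)‖²) / (∑'_{l:ℤ} ‖S(f − l f_s)‖² · 𝒮η(f − l f_s)) and γ⋆(f) := ⨆_{l:ℤ} ‖H(f − l f_s)‖² / 𝒮η(f − l f_s). Assume: for every f ∈ I both series defining γ_S(f) are summable, the denominator series has positive sum, the family l ↦ ‖H(f − l f_s)‖²/𝒮η(f − l f_s) is bounded above, and γ_S(f) > 0; the functions γ_S and γ⋆ are measurable on I and there exists B with γ⋆(f) ≤ B for all f ∈ I. Let ν_S, ν⋆ > 0 be reals satisfying ∫_{f ∈ I} max (ν_S − 1/γ_S(f)) 0 = P and ∫_{f ∈ I} max (ν⋆ − 1/γ⋆(f)) 0 = P. Then ∫_{f ∈ I} (1/2) · max (Real.log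 (ν_S · γ_S(f))) 0 ≤ ∫_{f ∈ I} (1/2) · max (Real.log (ν⋆ · γ⋆(f))) 0. -/
open MeasureTheory

lemma logplus_eq_waterfill (ν g : ℝ) (hν : 0 < ν) (hg : 0 < g) :
    max (Real.log (ν * g)) 0 = Real.log (1 + max (ν - 1 / g) 0 * g) := by
  rcases le_or_gt (1 / g) ν with h | h
  · have h1 : (1 : ℝ) ≤ ν * g := by
      rw [div_le_iff₀ hg] at h; linarith [h]
    rw [max_eq_left (sub_nonneg.2 h), max_eq_left (Real.log_nonneg h1)]
    congr 1
    field_simp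
    ring
  · have h1 : ν * g < 1 := by
      rw [lt_div_iff₀ hg] at h; linarith
    rw [max_eq_right (by linarith : ν - 1 / g ≤ 0), zero_mul, add_zero, Real.log_one,
      max_eq_right (Real.log_nonpos (by positivity) h1.le)]

lemma waterfill_key (ν ν' g g' : ℝ) (hν : 0 < ν) (hν' : 0 < ν') (hg : 0 < g)
    (hgg' : g ≤ g') :
    max (Real.log (ν * g)) 0 ≤
      max (Real.log (ν' * g')) 0 + (max (ν - 1 / g) 0 - max (ν' - 1 / g') 0) / ν' := by
  have hg' : 0 < g' := hg.trans_le hgg'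
  set p := max (ν - 1 / g) 0 with hp_def
  set q := max (ν' - 1 / g') 0 with hq_def
  have hp : 0 ≤ p := le_max_right _ _
  have hq : 0 ≤ q := le_max_right _ _
  rw [logplus_eq_waterfill ν g hν hg, logplus_eq_waterfill ν' g' hν' hg']
  have hx : (0:ℝ) < 1 + p * g := by positivity
  have hx' : (0:ℝ) < 1 + p * g' := by positivity
  have hy : (0:ℝ) < 1 + q * g' := by positivity
  have step1 : Real.log (1 + p * g) ≤ Real.log (1 + p * g') :=
    Real.log_le_log hx (by nlinarith)
  have step2 : Real.log (1 + p * g') ≤ Real.log (1 + q * g') + ((p - q) * g') / (1 + q * g') := by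
    have hdiv : Real.log ((1 + p * g') / (1 + q * g')) ≤ (1 + p * g') / (1 + q * g') - 1 :=
      Real.log_le_sub_one_of_pos (by positivity)
    rw [Real.log_div hx'.ne' hy.ne'] at hdiv
    have : (1 + p * g') / (1 + q * g') - 1 = ((p - q) * g') / (1 + q * g') := by
      field_simp; ring
    linarith [this ▸ hdiv]
  have step3 : ((p - q) * g') / (1 + q * g') ≤ (p - q) / ν' := by
    rcases le_or_gt (1 / g') ν' with h | h
    · have hqe : q = ν' - 1 / g' := max_eq_left (sub_nonneg.2 h)
      have h1 : 1 + q * g' = ν' * g' := by rw [hqe]; field_simp; ring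
      rw [h1]
      have : (p - q) * g' / (ν' * g') = (p - q) / ν' := by
        rw [mul_comm ν' g', ← div_div, mul_div_assoc, div_self hg'.ne', mul_one]
      exact this.le
    · have h1 : ν' * g' < 1 := by rw [lt_div_iff₀ hg'] at h; linarith
      have hqe : q = 0 := max_eq_right (by nlinarith)
      rw [hqe, zero_mul, add_zero, div_one, sub_zero, div_eq_mul_inv, ← one_div]
      have hge : g' ≤ 1 / ν' := by rw [le_div_iff₀ hν']; linarith
      calc p * g' ≤ p * (1 / ν') := mul_le_mul_of_nonneg_left hge hp
        _ = p * (1 / ν') := rfl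
  linarith

/-- Optimality of the alias-suppressing prefilter (Theorem 3, integral/capacity
form): the water-filling capacity obtained with any prefilter `S` is at most
the water-filling capacity of the optimal (alias-suppressing) prefilter, whose
aliased SNR is `γ⋆(f) = ⨆ l, ‖H(f − l f_s)‖² / 𝒮η(f − l f_s)`. -/
theorem capacity_le_capacity_of_optimal_prefilter
    (fs P : ℝ) (hfs : 0 < fs) (hP : 0 < P)
    (H S : ℝ → ℂ) (Sη : ℝ → ℝ) (hSη : ∀ f, 0 < Sη f)
    (γS γstar : ℝ → ℝ)
    (hγSdef : ∀ f ∈ Set.Icc (-(fs / 2)) (fs / 2),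
      γS f = (∑' l : ℤ, ‖H (f - l * fs)‖ ^ 2 * ‖S (f - l * fs)‖ ^ 2) /
             (∑' l : ℤ, ‖S (f - l * fs)‖ ^ 2 * Sη (f - l * fs)))
    (hγstardef : ∀ f ∈ Set.Icc (-(fs / 2)) (fs / 2),
      γstar f = ⨆ l : ℤ, ‖H (f - l * fs)‖ ^ 2 / Sη (f - l * fs))
    (hsumNum : ∀ f ∈ Set.Icc (-(fs / 2)) (fs / 2),
      Summable (fun l : ℤ => ‖H (f - l * fs)‖ ^ 2 * ‖S (f - l * fs)‖ ^ 2))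
    (hsumDen : ∀ f ∈ Set.Icc (-(fs / 2)) (fs / 2),
      Summable (fun l : ℤ => ‖S (f - l * fs)‖ ^ 2 * Sη (f - l * fs)))
    (hDenPos : ∀ f ∈ Set.Icc (-(fs / 2)) (fs / 2),
      0 < ∑' l : ℤ, ‖S (f - l * fs)‖ ^ 2 * Sη (f - l * fs))
    (hBdd : ∀ f ∈ Set.Icc (-(fs / 2)) (fs / 2),
      BddAbove (Set.range fun l : ℤ => ‖H (f - l * fs)‖ ^ 2 / Sη (f - l * fs)))
    (hγSpos : ∀ f ∈ Set.Icc (-(fs / 2)) (fs / 2), 0 < γS f)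
    (hmeasS : AEStronglyMeasurable γS (volume.restrict (Set.Icc (-(fs / 2)) (fs / 2))))
    (hmeasStar : AEStronglyMeasurable γstar (volume.restrict (Set.Icc (-(fs / 2)) (fs / 2))))
    (B : ℝ) (hB : ∀ f ∈ Set.Icc (-(fs / 2)) (fs / 2), γstar f ≤ B)
    (νS νstar : ℝ) (hνS : 0 < νS) (hνstar : 0 < νstar)
    (hpowS : ∫ f in Set.Icc (-(fs / 2)) (fs / 2), max (νS - 1 / γS f) 0 = P)
    (hpowStar : ∫ f in Set.Icc (-(fs / 2)) (fs / 2), max (νstar - 1 / γstar f) 0 = P) :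
    ∫ f in Set.Icc (-(fs / 2)) (fs / 2), (1 / 2) * max (Real.log (νS * γS f)) 0 ≤
      ∫ f in Set.Icc (-(fs / 2)) (fs / 2), (1 / 2) * max (Real.log (νstar * γstar f)) 0 := by
  set I : Set ℝ := Set.Icc (-(fs / 2)) (fs / 2) with hI
  -- γS ≤ γstar on I
  have hle : ∀ f ∈ I, γS f ≤ γstar f := by
    intro f hf
    have hden := hDenPos f hf
    have hterm : ∀ l : ℤ, ‖H (f - l * fs)‖ ^ 2 * ‖S (f - l * fs)‖ ^ 2 ≤
        γstar f * (‖S (f - l * fs)‖ ^ 2 * Sη (f - l * fs)) := by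
      intro l
      have hratio : ‖H (f - l * fs)‖ ^ 2 / Sη (f - l * fs) ≤ γstar f := by
        rw [hγstardef f hf]
        exact le_ciSup (hBdd f hf) l
      have hn := hSη (f - l * fs)
      have heq : ‖H (f - l * fs)‖ ^ 2 * ‖S (f - l * fs)‖ ^ 2 =
          (‖H (f - l * fs)‖ ^ 2 / Sη (f - l * fs)) * (‖S (f - l * fs)‖ ^ 2 * Sη (f - l * fs)) := by
        field_simp
      rw [heq]
      exact mul_le_mul_of_nonneg_right hratio (by positivity)
    have hsum : (∑' l : ℤ, ‖H (f - l * fs)‖ ^ 2 * ‖S (f - l * fs)‖ ^ 2) ≤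
        γstar f * ∑' l : ℤ, ‖S (f - l * fs)‖ ^ 2 * Sη (f - l * fs) := by
      rw [← tsum_mul_left]
      exact Summable.tsum_le_tsum hterm (hsumNum f hf) ((hsumDen f hf).mul_left _)
    rw [hγSdef f hf, div_le_iff₀ hden]
    linarith
  have hstarpos : ∀ f ∈ I, 0 < γstar f := fun f hf => (hγSpos f hf).trans_le (hle f hf)
  -- measurability
  have hmS : AEMeasurable γS (volume.restrict I) := hmeasS.aemeasurable
  have hmT : AEMeasurable γstar (volume.restrict I) := hmeasStar.aemeasurable
  have mcapS : AEStronglyMeasurable (fun f => (1 / 2) * max (Real.log (νS * γS f)) 0)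
      (volume.restrict I) :=
    (((Real.measurable_log.comp_aemeasurable (hmS.const_mul νS)).max
      aemeasurable_const).const_mul _).aestronglyMeasurable
  have mcapT : AEStronglyMeasurable (fun f => (1 / 2) * max (Real.log (νstar * γstar f)) 0)
      (volume.restrict I) :=
    (((Real.measurable_log.comp_aemeasurable (hmT.const_mul νstar)).max
      aemeasurable_const).const_mul _).aestronglyMeasurable
  have mpS : AEStronglyMeasurable (fun f => max (νS - 1 / γS f) 0) (volume.restrict I) :=
    ((aemeasurable_const.sub (aemeasurable_const.div hmS)).max
      aemeasurable_const).aestronglyMeasurable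
  have mpT : AEStronglyMeasurable (fun f => max (νstar - 1 / γstar f) 0) (volume.restrict I) :=
    ((aemeasurable_const.sub (aemeasurable_const.div hmT)).max
      aemeasurable_const).aestronglyMeasurable
  -- integrability of the power allocations (otherwise the integrals would be 0 ≠ P)
  have hIpS : IntegrableOn (fun f => max (νS - 1 / γS f) 0) I := by
    by_contra h
    rw [integral_undef h] at hpowS
    exact absurd hpowS.symm hP.ne'
  have hIpT : IntegrableOn (fun f => max (νstar - 1 / γstar f) 0) I := by
    by_contra h
    rw [integral_undef h] at hpowStar
    exact absurd hpowStar.symm hP.ne'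
  -- integrability of the optimal capacity integrand (bounded)
  have hIcapT : IntegrableOn (fun f => (1 / 2) * max (Real.log (νstar * γstar f)) 0) I := by
    apply Integrable.mono' (integrable_const ((1 / 2) * max (Real.log (νstar * B)) 0)) mcapT
    filter_upwards [ae_restrict_mem measurableSet_Icc] with f hf
    have h0 : (0:ℝ) ≤ max (Real.log (νstar * γstar f)) 0 := le_max_right _ _
    rw [Real.norm_eq_abs, abs_of_nonneg (mul_nonneg (by norm_num) h0)]
    have : Real.log (νstar * γstar f) ≤ Real.log (νstar * B) :=
      Real.log_le_log (by have := hstarpos f hf; positivity)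
        (mul_le_mul_of_nonneg_left (hB f hf) hνstar.le)
    have := max_le_max this (le_refl (0:ℝ))
    linarith
  -- the key pointwise inequality on I
  have hkey : ∀ f ∈ I, (1 / 2) * max (Real.log (νS * γS f)) 0 ≤
      (1 / 2) * max (Real.log (νstar * γstar f)) 0 +
        (1 / 2) * ((max (νS - 1 / γS f) 0 - max (νstar - 1 / γstar f) 0) / νstar) := by
    intro f hf
    have := waterfill_key νS νstar (γS f) (γstar f) hνS hνstar (hγSpos f hf) (hle f hf)
    linarith
  -- integrability of correction term and of the S-capacity integrand
  have hInt2 : IntegrableOn (fun f =>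
      (1 / 2) * ((max (νS - 1 / γS f) 0 - max (νstar - 1 / γstar f) 0) / νstar)) I :=
    ((hIpS.sub hIpT).div_const νstar).const_mul (1 / 2)
  have hInt2' : IntegrableOn (fun f =>
      (1 / 2) * ((max (νS - 1 / γS f) 0) / νstar)) I :=
    (hIpS.div_const νstar).const_mul (1 / 2)
  have hIcapS : IntegrableOn (fun f => (1 / 2) * max (Real.log (νS * γS f)) 0) I := by
    apply Integrable.mono' (hIcapT.add hInt2') mcapS
    filter_upwards [ae_restrict_mem measurableSet_Icc] with f hf
    have h0 : (0:ℝ) ≤ max (Real.log (νS * γS f)) 0 := le_max_right _ _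
    rw [Real.norm_eq_abs, abs_of_nonneg (mul_nonneg (by norm_num) h0)]
    have h1 := hkey f hf
    have h2 : (0:ℝ) ≤ max (νstar - 1 / γstar f) 0 := le_max_right _ _
    have h3 : (max (νS - 1 / γS f) 0 - max (νstar - 1 / γstar f) 0) / νstar ≤
        max (νS - 1 / γS f) 0 / νstar := by
      gcongr
      linarith
    simp only [Pi.add_apply]
    linarith
  -- put it together
  have hmono := setIntegral_mono_on hIcapS (hIcapT.add hInt2)
    measurableSet_Icc (fun f hf => hkey f hf)
  simp only [Pi.add_apply] at hmono
  rw [integral_add hIcapT hInt2] at hmono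
  have hzero : (∫ f in I,
      (1 / 2) * ((max (νS - 1 / γS f) 0 - max (νstar - 1 / γstar f) 0) / νstar)) = 0 := by
    rw [integral_const_mul, integral_div, integral_sub hIpS hIpT, hpowS, hpowStar, sub_self,
      zero_div, mul_zero]
  rw [hzero, add_zero] at hmono
  exact hmono
end

section
/- Monotonicity of water-filling capacity in the SNR profile: Let W > 0, P > 0, and let γ₁, γ₂ : ℝ → ℝ be measurable functions with 0 < γ₂(f) and γ₂(f) ≤ γ₁(f) for every f ∈ I := Set.Icc (−W) W, and suppose there exists B with γ₁(f) ≤ B for all f ∈ I. Let ν₁, ν₂ > 0 be reals satisfying ∫_{f ∈ I} max (ν₁ − 1/γ₁(f)) 0 = P and ∫_{f ∈ I} max (ν₂ − 1/γ₂(f)) 0 = P. Then ∫_{f ∈ I} (1/2) · max (Real.log (ν₂ · γ₂(f))) 0 ≤ ∫_{f ∈ I} (1/2) · max (Real.log (ν₁ · γ₁(f))) 0. -/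
open MeasureTheory


lemma logplus_eq' (x : ℝ) (hx : 0 < x) : max (Real.log x) 0 = Real.log (max x 1) := by
  rcases le_total x 1 with h | h
  · rw [max_eq_right h, max_eq_right (Real.log_nonpos (le_of_lt hx) h), Real.log_one]
  · rw [max_eq_left h, max_eq_left (Real.log_nonneg h)]

lemma waterfilling_ptwise (a b ν₁ ν₂ : ℝ) (hb : 0 < b) (hba : b ≤ a)
    (hν₁ : 0 < ν₁) (hν₂ : 0 < ν₂) :
    max (Real.log (ν₂ * b)) 0 ≤
      max (Real.log (ν₁ * a)) 0 + (1/ν₁) * (max (ν₂ - 1/b) 0 - max (ν₁ - 1/a) 0) := by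
  have ha : 0 < a := lt_of_lt_of_le hb hba
  set g₁ := 1/a with hg₁
  set g₂ := 1/b with hg₂
  have hg₁pos : 0 < g₁ := by positivity
  have hg₂pos : 0 < g₂ := by positivity
  have hg12 : g₁ ≤ g₂ := one_div_le_one_div_of_le hb hba
  set p₁ := max (ν₁ - g₁) 0 with hp₁
  set p₂ := max (ν₂ - g₂) 0 with hp₂
  have hp₁nn : 0 ≤ p₁ := le_max_right _ _
  have hp₂nn : 0 ≤ p₂ := le_max_right _ _
  have hsum₁ : g₁ + p₁ = max ν₁ g₁ := by
    rw [hp₁]; rcases le_total ν₁ g₁ with h | h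
    · rw [max_eq_right h, max_eq_right (by linarith)]; ring
    · rw [max_eq_left h, max_eq_left (by linarith)]; ring
  have hsum₂ : g₂ + p₂ = max ν₂ g₂ := by
    rw [hp₂]; rcases le_total ν₂ g₂ with h | h
    · rw [max_eq_right h, max_eq_right (by linarith)]; ring
    · rw [max_eq_left h, max_eq_left (by linarith)]; ring
  have hsum₁pos : 0 < g₁ + p₁ := by positivity
  have hsum₂pos : 0 < g₂ + p₂ := by positivity
  have hL₂ : max (Real.log (ν₂ * b)) 0 = Real.log ((g₂ + p₂) / g₂) := by
    rw [logplus_eq' _ (by positivity)]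
    congr 1
    rw [hsum₂, hg₂, eq_div_iff (by positivity), max_mul_of_nonneg _ _ (by positivity : (0:ℝ) ≤ 1/b)]
    congr 1 <;> field_simp
  have hL₁ : max (Real.log (ν₁ * a)) 0 = Real.log ((g₁ + p₁) / g₁) := by
    rw [logplus_eq' _ (by positivity)]
    congr 1
    rw [hsum₁, hg₁, eq_div_iff (by positivity), max_mul_of_nonneg _ _ (by positivity : (0:ℝ) ≤ 1/a)]
    congr 1 <;> field_simp
  rw [hL₁, hL₂]
  have step1 : Real.log ((g₂ + p₂) / g₂) ≤ Real.log ((g₁ + p₂) / g₁) := by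
    apply Real.log_le_log (by positivity)
    rw [div_le_div_iff₀ hg₂pos hg₁pos]
    nlinarith [mul_nonneg hp₂nn (sub_nonneg.mpr hg12)]
  have step2 : Real.log ((g₁ + p₂) / g₁) - Real.log ((g₁ + p₁) / g₁) ≤ (p₂ - p₁) / ν₁ := by
    have h1 : Real.log ((g₁ + p₂) / g₁) - Real.log ((g₁ + p₁) / g₁)
        = Real.log ((g₁ + p₂) / (g₁ + p₁)) := by
      rw [Real.log_div (by positivity) (ne_of_gt hg₁pos),
          Real.log_div (by positivity) (ne_of_gt hg₁pos),
          Real.log_div (by positivity) (ne_of_gt hsum₁pos)]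
      ring
    rw [h1]
    have h2 : Real.log ((g₁ + p₂) / (g₁ + p₁)) ≤ (g₁ + p₂) / (g₁ + p₁) - 1 :=
      Real.log_le_sub_one_of_pos (by positivity)
    have h3 : (g₁ + p₂) / (g₁ + p₁) - 1 = (p₂ - p₁) / (g₁ + p₁) := by field_simp; ring
    rw [h3] at h2
    refine h2.trans ?_
    rcases le_or_gt p₁ p₂ with h | h
    · apply div_le_div_of_nonneg_left (by linarith) hν₁
      rw [hsum₁]; exact le_max_left _ _
    · have hp₁pos : 0 < p₁ := lt_of_le_of_lt hp₂nn h
      have hgt : ν₁ - g₁ > 0 := by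
        by_contra hc
        push_neg at hc
        rw [hp₁, max_eq_right hc] at hp₁pos
        exact lt_irrefl 0 hp₁pos
      have heq : g₁ + p₁ = ν₁ := by rw [hsum₁, max_eq_left (by linarith)]
      rw [heq]
  linarith [step1, step2, (by rw [one_div, inv_mul_eq_div] : (1/ν₁) * (p₂ - p₁) = (p₂ - p₁)/ν₁)]

/-- Monotonicity of water-filling capacity in the SNR profile: if `γ₂ ≤ γ₁`
pointwise on the band `[−W, W]`, then the water-filling capacity of the
channel with SNR `γ₂` is at most that of the channel with SNR `γ₁`. -/
theorem waterfilling_capacity_mono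
    (W P : ℝ) (hW : 0 < W) (hP : 0 < P)
    (γ₁ γ₂ : ℝ → ℝ) (hmeas₁ : Measurable γ₁) (hmeas₂ : Measurable γ₂)
    (hpos : ∀ f ∈ Set.Icc (-W) W, 0 < γ₂ f)
    (hle : ∀ f ∈ Set.Icc (-W) W, γ₂ f ≤ γ₁ f)
    (B : ℝ) (hB : ∀ f ∈ Set.Icc (-W) W, γ₁ f ≤ B)
    (ν₁ ν₂ : ℝ) (hν₁ : 0 < ν₁) (hν₂ : 0 < ν₂)
    (hpow₁ : ∫ f in Set.Icc (-W) W, max (ν₁ - 1 / γ₁ f) 0 = P)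
    (hpow₂ : ∫ f in Set.Icc (-W) W, max (ν₂ - 1 / γ₂ f) 0 = P) :
    ∫ f in Set.Icc (-W) W, (1 / 2) * max (Real.log (ν₂ * γ₂ f)) 0 ≤
      ∫ f in Set.Icc (-W) W, (1 / 2) * max (Real.log (ν₁ * γ₁ f)) 0 := by
  set S := Set.Icc (-W) W with hS
  have hmS : MeasurableSet S := measurableSet_Icc
  -- Integrability of power allocations
  have hint_p₁ : IntegrableOn (fun f => max (ν₁ - 1 / γ₁ f) 0) S := by
    apply Integrable.mono' (integrable_const ν₁)
    · exact ((measurable_const.sub (measurable_const.div hmeas₁)).max measurable_const).aestronglyMeasurable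
    · refine (ae_restrict_iff' hmS).mpr (ae_of_all _ fun x hx => ?_)
      have h1 : 0 < γ₁ x := lt_of_lt_of_le (hpos x hx) (hle x hx)
      have h2 : 0 ≤ 1 / γ₁ x := by positivity
      rw [Real.norm_eq_abs, abs_of_nonneg (le_max_right _ _)]
      exact max_le (by linarith) (le_of_lt hν₁)
  have hint_p₂ : IntegrableOn (fun f => max (ν₂ - 1 / γ₂ f) 0) S := by
    apply Integrable.mono' (integrable_const ν₂)
    · exact ((measurable_const.sub (measurable_const.div hmeas₂)).max measurable_const).aestronglyMeasurable
    · refine (ae_restrict_iff' hmS).mpr (ae_of_all _ fun x hx => ?_)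
      have h1 : 0 < γ₂ x := hpos x hx
      have h2 : 0 ≤ 1 / γ₂ x := by positivity
      rw [Real.norm_eq_abs, abs_of_nonneg (le_max_right _ _)]
      exact max_le (by linarith) (le_of_lt hν₂)
  -- Integrability of the log terms
  have hint_L₁ : IntegrableOn (fun f => max (Real.log (ν₁ * γ₁ f)) 0) S := by
    apply Integrable.mono' (integrable_const (max (Real.log (ν₁ * B)) 0))
    · exact ((Real.measurable_log.comp (measurable_const.mul hmeas₁)).max measurable_const).aestronglyMeasurable
    · refine (ae_restrict_iff' hmS).mpr (ae_of_all _ fun x hx => ?_)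
      have h1 : 0 < γ₁ x := lt_of_lt_of_le (hpos x hx) (hle x hx)
      rw [Real.norm_eq_abs, abs_of_nonneg (le_max_right _ _)]
      exact max_le_max (Real.log_le_log (by positivity)
        (mul_le_mul_of_nonneg_left (hB x hx) (le_of_lt hν₁))) le_rfl
  have hint_L₂ : IntegrableOn (fun f => max (Real.log (ν₂ * γ₂ f)) 0) S := by
    apply Integrable.mono' (integrable_const (max (Real.log (ν₂ * B)) 0))
    · exact ((Real.measurable_log.comp (measurable_const.mul hmeas₂)).max measurable_const).aestronglyMeasurable
    · refine (ae_restrict_iff' hmS).mpr (ae_of_all _ fun x hx => ?_)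
      have h1 : 0 < γ₂ x := hpos x hx
      rw [Real.norm_eq_abs, abs_of_nonneg (le_max_right _ _)]
      exact max_le_max (Real.log_le_log (by positivity)
        (mul_le_mul_of_nonneg_left ((hle x hx).trans (hB x hx)) (le_of_lt hν₂))) le_rfl
  have hsub : IntegrableOn (fun f => max (ν₂ - 1 / γ₂ f) 0 - max (ν₁ - 1 / γ₁ f) 0) S :=
    hint_p₂.sub hint_p₁
  have hintRHS : IntegrableOn (fun f => (1/2 : ℝ) * (max (Real.log (ν₁ * γ₁ f)) 0 +
      (1/ν₁) * (max (ν₂ - 1 / γ₂ f) 0 - max (ν₁ - 1 / γ₁ f) 0))) S :=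
    ((hint_L₁.add (hsub.const_mul _)).const_mul _)
  calc ∫ f in S, (1 / 2) * max (Real.log (ν₂ * γ₂ f)) 0
      ≤ ∫ f in S, (1/2 : ℝ) * (max (Real.log (ν₁ * γ₁ f)) 0 +
          (1/ν₁) * (max (ν₂ - 1 / γ₂ f) 0 - max (ν₁ - 1 / γ₁ f) 0)) := by
        apply setIntegral_mono_on (hint_L₂.const_mul _) hintRHS hmS
        intro x hx
        have := waterfilling_ptwise (γ₁ x) (γ₂ x) ν₁ ν₂ (hpos x hx) (hle x hx) hν₁ hν₂
        exact mul_le_mul_of_nonneg_left this (by norm_num)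
    _ = ∫ f in S, (1 / 2) * max (Real.log (ν₁ * γ₁ f)) 0 := by
        rw [integral_const_mul, integral_const_mul,
          integral_add hint_L₁ (hsub.const_mul _),
          integral_const_mul, integral_sub hint_p₂ hint_p₁, hpow₂, hpow₁]
        ring
end

section
/- Eigenvalue upper bounds for a coisometry compression of a diagonal matrix (Proposition 4, bound part): Let n be a finite type with decidable equality, M : ℕ, and let A : Matrix (Fin M) n ℂ satisfy A * Aᴴ = 1 (the rows of A are orthonormal). Let d : n → ℝ with 0 ≤ d i for all i, and set T := A * Matrix.diagonal (fun i => (d i : ℂ)) * Aᴴ. Suppose ι : Fin M → n is injective, d ∘ ι is antitone, and d j ≤ d (ι k) for every k : Fin M and every j outside the range of ι. Then T is Hermitian, and for every antitone function e : Fin M → ℝ that enumerates the eigenvalues of T with multiplicity (i.e., e = (the eigenvalue tuple of T given by the spectral theorem) composed with some permutation of Fin M), one has e k ≤ d (ι k) for every k : Fin M. -/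
open scoped Matrix

/-- Eigenvalue upper bounds for a coisometry compression of a diagonal matrix
(Proposition 4, bound part): if `A` has orthonormal rows and `d` is a
nonnegative diagonal, with `ι` enumerating (in decreasing order) indices of
the `M` largest values of `d`, then `T = A (diagonal d) Aᴴ` is Hermitian and its
`k`-th largest eigenvalue is at most `d (ι k)`. -/
theorem eigenvalues_coisometry_compression_le
    {n : Type*} [Fintype n] [DecidableEq n] (M : ℕ)
    (A : Matrix (Fin M) n ℂ) (hA : A * Aᴴ = 1)
    (d : n → ℝ) (hd : ∀ i, 0 ≤ d i)
    (ι : Fin M → n) (hι : Function.Injective ι)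
    (hanti : Antitone (d ∘ ι))
    (hmax : ∀ k : Fin M, ∀ j, j ∉ Set.range ι → d j ≤ d (ι k)) :
    ∃ hT : (A * Matrix.diagonal (fun i => (d i : ℂ)) * Aᴴ).IsHermitian,
      ∀ e : Fin M → ℝ, Antitone e →
        (∃ σ : Equiv.Perm (Fin M), e = hT.eigenvalues ∘ σ) →
        ∀ k : Fin M, e k ≤ d (ι k) := by
  have hDH : (Matrix.diagonal (fun i => (d i : ℂ)))ᴴ = Matrix.diagonal (fun i => (d i : ℂ)) := by
    have h0 : (star fun i => (d i : ℂ)) = fun i => (d i : ℂ) := by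
      funext i
      exact Complex.conj_ofReal _
    rw [Matrix.diagonal_conjTranspose, h0]
  have hT : (A * Matrix.diagonal (fun i => (d i : ℂ)) * Aᴴ).IsHermitian := by
    unfold Matrix.IsHermitian
    rw [Matrix.conjTranspose_mul, Matrix.conjTranspose_mul, Matrix.conjTranspose_conjTranspose,
      hDH, Matrix.mul_assoc]
  refine ⟨hT, ?_⟩
  rintro e he ⟨σ, hσ⟩ k
  set T := A * Matrix.diagonal (fun i => (d i : ℂ)) * Aᴴ with hTdef
  set c := d (ι k) with hc
  -- the subspace S of codimension ≤ k
  let φ : (Fin M → ℂ) →ₗ[ℂ] (Fin (k : ℕ) → ℂ) :=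
    LinearMap.pi fun j => (LinearMap.proj (ι (Fin.castLE k.isLt.le j))).comp (Matrix.mulVecLin Aᴴ)
  have hSdim : (M : ℕ) - (k : ℕ) ≤ Module.finrank ℂ (LinearMap.ker φ) := by
    have h1 := LinearMap.finrank_range_add_finrank_ker φ
    have h2 : Module.finrank ℂ (LinearMap.range φ) ≤ (k : ℕ) := by
      simpa using (LinearMap.range φ).finrank_le
    simp only [Module.finrank_fin_fun] at h1
    omega
  -- the span of the top k+1 eigenvectors
  let ψ : Fin ((k : ℕ) + 1) → Fin M := fun j => σ (Fin.castLE k.isLt j)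
  have hψ : Function.Injective ψ := σ.injective.comp (Fin.castLE_injective _)
  let w : Fin ((k : ℕ) + 1) → (Fin M → ℂ) := fun j => ⇑(hT.eigenvectorBasis (ψ j))
  have hli : LinearIndependent ℂ w := by
    have h0 : LinearIndependent ℂ (⇑(hT.eigenvectorBasis) : Fin M → EuclideanSpace ℂ (Fin M)) := by
      have := hT.eigenvectorBasis.toBasis.linearIndependent
      rwa [OrthonormalBasis.coe_toBasis] at this
    exact (h0.comp ψ hψ).map' (WithLp.linearEquiv 2 ℂ (Fin M → ℂ)).toLinearMap (LinearEquiv.ker _)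
  have hWdim : Module.finrank ℂ (Submodule.span ℂ (Set.range w)) = (k : ℕ) + 1 := by
    rw [finrank_span_eq_card hli, Fintype.card_fin]
  set W := Submodule.span ℂ (Set.range w) with hW
  set S := LinearMap.ker φ with hS
  -- find a nonzero vector in W ⊓ S
  have hdim := Submodule.finrank_sup_add_finrank_inf_eq W S
  have hle : Module.finrank ℂ ↥(W ⊔ S) ≤ M := by
    simpa [Module.finrank_fin_fun] using (W ⊔ S).finrank_le
  have hpos : 0 < Module.finrank ℂ ↥(W ⊓ S) := by omega
  have hne : (W ⊓ S) ≠ ⊥ := by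
    intro h
    rw [h, finrank_bot] at hpos
    omega
  obtain ⟨x, hxWS, hx0⟩ := Submodule.ne_bot_iff _ |>.mp hne
  have hxW : x ∈ W := hxWS.1
  have hxS : x ∈ S := hxWS.2
  obtain ⟨coef, hcoef⟩ := (Submodule.mem_span_range_iff_exists_fun ℂ).mp hxW
  -- notation
  set y : n → ℂ := Aᴴ *ᵥ x with hy
  -- basic dot product identities
  have hstary : star y = star x ᵥ* A := by
    rw [hy, Matrix.star_mulVec, Matrix.conjTranspose_conjTranspose]
  have hAz : ∀ z : n → ℂ, star x ⬝ᵥ (A *ᵥ z) = star y ⬝ᵥ z := by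
    intro z
    rw [Matrix.dotProduct_mulVec, hstary]
  -- S-side value of the quadratic form
  have hq1 : star x ⬝ᵥ (T *ᵥ x) = ∑ i, (d i : ℂ) * (Complex.normSq (y i) : ℂ) := by
    have h1 : T *ᵥ x = A *ᵥ (Matrix.diagonal (fun i => (d i : ℂ)) *ᵥ y) := by
      rw [hTdef, Matrix.mul_assoc, ← Matrix.mulVec_mulVec, ← Matrix.mulVec_mulVec]
    rw [h1, hAz]
    simp only [dotProduct, Matrix.mulVec_diagonal, Pi.star_apply]
    congr 1
    funext i
    rw [show star (y i) * ((d i : ℂ) * y i) = (d i : ℂ) * (y i * star (y i)) by ring,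
      Complex.star_def, Complex.mul_conj]
  have hq2 : star x ⬝ᵥ x = ∑ i, (Complex.normSq (y i) : ℂ) := by
    have h1 : x = A *ᵥ y := by
      rw [hy, Matrix.mulVec_mulVec, hA, Matrix.one_mulVec]
    calc star x ⬝ᵥ x = star x ⬝ᵥ (A *ᵥ y) := by rw [← h1]
      _ = star y ⬝ᵥ y := hAz y
    simp only [dotProduct, Pi.star_apply]
    congr 1
    funext i
    rw [mul_comm, Complex.star_def, Complex.mul_conj]
  -- W-side value of the quadratic form
  have horth : ∀ i j, star (w i) ⬝ᵥ w j = if i = j then 1 else 0 := by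
    intro i j
    have h0 := hT.eigenvectorBasis.orthonormal
    rw [orthonormal_iff_ite] at h0
    have h := h0 (ψ i) (ψ j)
    rw [PiLp.inner_apply] at h
    simp only [RCLike.inner_apply, hψ.eq_iff] at h
    simp only [dotProduct, Pi.star_apply, Complex.star_def]
    rw [← h]
    exact Finset.sum_congr rfl fun t _ => mul_comm _ _
  have hTw : ∀ j, T *ᵥ w j = (e (Fin.castLE k.isLt j) : ℂ) • w j := by
    intro j
    have h := hT.mulVec_eigenvectorBasis (ψ j)
    have he' : hT.eigenvalues (ψ j) = e (Fin.castLE k.isLt j) := by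
      rw [hσ]; rfl
    rw [he'] at h
    rw [show T *ᵥ w j = (A * Matrix.diagonal (fun i => (d i : ℂ)) * Aᴴ) *ᵥ ⇑(hT.eigenvectorBasis (ψ j)) from rfl, h]
    funext i
    rw [Pi.smul_apply, Pi.smul_apply, Complex.real_smul]
    rfl
  have hstardot : ∀ z : Fin M → ℂ, star (∑ i, coef i • w i) ⬝ᵥ z
      = ∑ i, star (coef i) * (star (w i) ⬝ᵥ z) := by
    intro z
    simp only [dotProduct, Pi.star_apply, star_sum, Finset.sum_apply, star_smul,
      Pi.smul_apply, smul_eq_mul, Finset.sum_mul, Finset.mul_sum, star_mul']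
    rw [Finset.sum_comm]
    exact Finset.sum_congr rfl fun i _ => Finset.sum_congr rfl fun t _ => by ring
  have hdotexp : ∀ (b : Fin ((k : ℕ) + 1) → ℂ),
      star x ⬝ᵥ (∑ j, b j • w j) = ∑ j, star (coef j) * b j := by
    intro b
    rw [← hcoef, hstardot]
    refine Finset.sum_congr rfl fun i _ => ?_
    have h2 : star (w i) ⬝ᵥ (∑ j, b j • w j) = ∑ j, b j * (star (w i) ⬝ᵥ w j) := by
      simp only [dotProduct, Pi.star_apply, Finset.sum_apply, Pi.smul_apply,
        smul_eq_mul, Finset.mul_sum]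
      rw [Finset.sum_comm]
      refine Finset.sum_congr rfl fun j _ => Finset.sum_congr rfl fun t _ => by ring
    rw [h2]
    simp [horth]
  have hq3 : star x ⬝ᵥ (T *ᵥ x) =
      ∑ j, ((e (Fin.castLE k.isLt j) : ℂ) * (Complex.normSq (coef j) : ℂ)) := by
    have hTx : T *ᵥ x = ∑ j, (coef j * (e (Fin.castLE k.isLt j) : ℂ)) • w j := by
      conv_lhs => rw [← hcoef]
      rw [show T *ᵥ (∑ j, coef j • w j) = T.mulVecLin (∑ j, coef j • w j) from rfl]
      rw [map_sum]
      refine Finset.sum_congr rfl fun j _ => ?_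
      rw [map_smul, Matrix.mulVecLin_apply, hTw j, smul_smul]
    rw [hTx, hdotexp]
    refine Finset.sum_congr rfl fun j _ => ?_
    rw [show star (coef j) * (coef j * (e (Fin.castLE k.isLt j) : ℂ))
        = (e (Fin.castLE k.isLt j) : ℂ) * (coef j * star (coef j)) by ring,
      Complex.star_def, Complex.mul_conj]
  have hq4 : star x ⬝ᵥ x = ∑ j, (Complex.normSq (coef j) : ℂ) := by
    have h0 := hdotexp coef
    rw [hcoef] at h0
    rw [h0]
    refine Finset.sum_congr rfl fun j _ => ?_
    rw [mul_comm, Complex.star_def, Complex.mul_conj]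
  -- pass to real equations
  set N : ℝ := ∑ i, Complex.normSq (y i) with hN
  have hq2' : star x ⬝ᵥ x = (N : ℂ) := by rw [hq2, hN]; push_cast; ring
  have hq4' : (∑ j, Complex.normSq (coef j)) = N := by
    have : ((∑ j, Complex.normSq (coef j) : ℝ) : ℂ) = (N : ℂ) := by
      rw [← hq2', hq4]; push_cast; ring
    exact_mod_cast this
  have hq13 : (∑ i, d i * Complex.normSq (y i))
      = ∑ j, e (Fin.castLE k.isLt j) * Complex.normSq (coef j) := by
    have hL : ((∑ i, d i * Complex.normSq (y i) : ℝ) : ℂ) = star x ⬝ᵥ (T *ᵥ x) := by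
      rw [hq1]; push_cast; ring
    have hR : ((∑ j, e (Fin.castLE k.isLt j) * Complex.normSq (coef j) : ℝ) : ℂ)
        = star x ⬝ᵥ (T *ᵥ x) := by
      rw [hq3]; push_cast; ring
    exact_mod_cast hL.trans hR.symm
  -- positivity of N
  have hNpos : 0 < N := by
    have hNnonneg : (0:ℝ) ≤ N := by
      rw [hN]
      exact Finset.sum_nonneg fun i _ => Complex.normSq_nonneg _
    rcases hNnonneg.lt_or_eq with h | h
    · exact h
    · exfalso
      apply hx0
      have hsum0 : (∑ j, Complex.normSq (coef j)) = 0 := by rw [hq4', ← h]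
      have hall : ∀ j, Complex.normSq (coef j) = 0 := by
        intro j
        have h0 := Finset.sum_eq_zero_iff_of_nonneg
          (fun i _ => Complex.normSq_nonneg (coef i)) |>.mp hsum0
        exact h0 j (Finset.mem_univ j)
      rw [← hcoef]
      refine Finset.sum_eq_zero fun j _ => ?_
      rw [Complex.normSq_eq_zero.mp (hall j), zero_smul]
  -- S-side: coordinates of y vanish on the top-k indices
  have hz : ∀ j : Fin (k : ℕ), y (ι (Fin.castLE k.isLt.le j)) = 0 := by
    intro j
    exact congr_fun (LinearMap.mem_ker.mp hxS) j
  -- S-side bound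
  have hub : (∑ i, d i * Complex.normSq (y i)) ≤ c * N := by
    rw [hN, Finset.mul_sum]
    refine Finset.sum_le_sum fun i _ => ?_
    by_cases hcase : ∃ j : Fin M, (j : ℕ) < (k : ℕ) ∧ ι j = i
    · obtain ⟨j, hj, rfl⟩ := hcase
      have h0 : y (ι j) = 0 := by
        have := hz ⟨(j : ℕ), hj⟩
        simpa [Fin.castLE, Fin.ext_iff] using this
      simp [h0]
    · have hdc : d i ≤ c := by
        by_cases hr : i ∈ Set.range ι
        · obtain ⟨j, rfl⟩ := hr
          have hjk : k ≤ j := by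
            by_contra hlt
            push_neg at hlt
            exact hcase ⟨j, hlt, rfl⟩
          exact hanti hjk
        · exact hmax k i hr
      exact mul_le_mul_of_nonneg_right hdc (Complex.normSq_nonneg _)
  -- W-side bound
  have hlb : e k * N ≤ ∑ j, e (Fin.castLE k.isLt j) * Complex.normSq (coef j) := by
    rw [← hq4', Finset.mul_sum]
    refine Finset.sum_le_sum fun j _ => ?_
    have hjk : Fin.castLE k.isLt j ≤ k := by
      rw [Fin.le_def]
      exact Nat.lt_succ_iff.mp j.isLt
    exact mul_le_mul_of_nonneg_right (he hjk) (Complex.normSq_nonneg _)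
  have := (hq13 ▸ hub : (∑ j, e (Fin.castLE k.isLt j) * Complex.normSq (coef j)) ≤ c * N)
  have hfin : e k * N ≤ c * N := le_trans hlb this
  exact le_of_mul_le_mul_right (by simpa [mul_comm] using hfin) hNpos
end

section
/- Trace bound for a coisometry compression of a diagonal matrix: Let n be a finite type with decidable equality, M : ℕ, and let A : Matrix (Fin M) n ℂ satisfy A * Aᴴ = 1. Let d : n → ℝ with 0 ≤ d i for all i, and let s be a Finset of n with s.card = M such that d j ≤ d i for every i ∈ s and every j ∉ s. Then the real part of the trace of A * Matrix.diagonal (fun i => (d i : ℂ)) * Aᴴ is at most ∑_{i ∈ s} d i. -/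
open scoped Matrix

/-- Trace bound for a coisometry compression of a diagonal matrix: if `A` has
orthonormal rows (`A Aᴴ = 1`) and `d` is nonnegative, then the trace of
`A (diagonal d) Aᴴ` is at most the sum of the `M` largest values of `d`
(collected in the `M`-element finset `s`). -/
theorem trace_coisometry_compression_le
    {n : Type*} [Fintype n] [DecidableEq n] (M : ℕ)
    (A : Matrix (Fin M) n ℂ) (hA : A * Aᴴ = 1)
    (d : n → ℝ) (hd : ∀ i, 0 ≤ d i)
    (s : Finset n) (hcard : s.card = M)
    (hmax : ∀ i ∈ s, ∀ j ∉ s, d j ≤ d i) :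
    (Matrix.trace (A * Matrix.diagonal (fun i => (d i : ℂ)) * Aᴴ)).re ≤
      ∑ i ∈ s, d i := by
  classical
  set P := Aᴴ * A with hP
  have hPP : P * P = P := by
    rw [hP, Matrix.mul_assoc, ← Matrix.mul_assoc A, hA, Matrix.one_mul]
  have hPH : Pᴴ = P := by
    rw [hP, Matrix.conjTranspose_mul, Matrix.conjTranspose_conjTranspose]
  have hsym : ∀ a b, star (P a b) = P b a := fun a b => congrFun (congrFun hPH b) a
  set c : n → ℝ := fun i => (P i i).re with hc
  have hcval : ∀ i, c i = ∑ k, Complex.normSq (A k i) := by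
    intro i
    have h1 : P i i = ∑ k, star (A k i) * A k i := by
      simp [hP, Matrix.mul_apply, Matrix.conjTranspose_apply]
    simp [hc, h1, Complex.re_sum, Complex.normSq_apply]
  have hc0 : ∀ i, 0 ≤ c i := fun i => by
    rw [hcval]; exact Finset.sum_nonneg fun k _ => Complex.normSq_nonneg _
  have hc1 : ∀ i, c i ≤ 1 := by
    intro i
    have h1 : P i i = ∑ j, P i j * star (P i j) := by
      conv_lhs => rw [← hPP]
      rw [Matrix.mul_apply]
      refine Finset.sum_congr rfl fun j _ => ?_
      rw [hsym]
    have h2 : c i = ∑ j, Complex.normSq (P i j) := by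
      simp [hc, h1, Complex.re_sum, Complex.mul_conj]
    have h3 : Complex.normSq (P i i) ≤ ∑ j, Complex.normSq (P i j) :=
      Finset.single_le_sum (fun j _ => Complex.normSq_nonneg _) (Finset.mem_univ i)
    have h4 : (c i)^2 ≤ Complex.normSq (P i i) := by
      rw [hc]
      simp only [Complex.normSq_apply]
      nlinarith [sq_nonneg ((P i i).im)]
    have := hc0 i
    nlinarith [h2, h3, h4]
  have hsum : ∑ i, c i = M := by
    have h1 : Matrix.trace P = (M : ℂ) := by
      rw [hP, Matrix.trace_mul_comm, hA, Matrix.trace_one]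
      simp
    have h2 : (Matrix.trace P).re = (M : ℝ) := by rw [h1]; simp
    rw [← h2, Matrix.trace, Complex.re_sum]
    rfl
  have htr : (Matrix.trace (A * Matrix.diagonal (fun i => (d i : ℂ)) * Aᴴ)).re
      = ∑ i, d i * c i := by
    rw [Matrix.trace_mul_cycle, ← hP]
    have h1 : Matrix.trace (P * Matrix.diagonal fun i => (d i : ℂ))
        = ∑ i, (d i : ℂ) * P i i := by
      rw [Matrix.trace]
      refine Finset.sum_congr rfl fun i _ => ?_
      rw [Matrix.diag_apply, Matrix.mul_diagonal]
      ring
    rw [h1, Complex.re_sum]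
    refine Finset.sum_congr rfl fun i _ => ?_
    simp [hc, Complex.re_ofReal_mul]
  rw [htr]
  rcases s.eq_empty_or_nonempty with rfl | hs
  · have hM0 : M = 0 := by simpa using hcard.symm
    have hz : ∑ i, c i = 0 := by rw [hsum, hM0]; simp
    have hz' : ∀ i ∈ Finset.univ, c i = 0 :=
      (Finset.sum_eq_zero_iff_of_nonneg (fun i _ => hc0 i)).mp hz
    have : ∑ i, d i * c i = 0 :=
      Finset.sum_eq_zero fun i hi => by rw [hz' i hi, mul_zero]
    simp [this]
  · set t := s.inf' hs d with ht
    have ht_le : ∀ i ∈ s, t ≤ d i := fun i hi => Finset.inf'_le d hi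
    obtain ⟨i0, hi0, hti0⟩ := s.exists_mem_eq_inf' hs d
    have ht0 : 0 ≤ t := by rw [ht, hti0]; exact hd i0
    have hle_t : ∀ j ∉ s, d j ≤ t := fun j hj => by rw [ht, hti0]; exact hmax i0 hi0 j hj
    have hsplit : ∑ i, d i * c i = ∑ i ∈ s, d i * c i + ∑ i ∈ sᶜ, d i * c i :=
      (Finset.sum_add_sum_compl s _).symm
    have h1 : ∑ i ∈ s, d i * c i ≤ ∑ i ∈ s, (d i + t * (c i - 1)) := by
      refine Finset.sum_le_sum fun i hi => ?_
      have := ht_le i hi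
      have := hc1 i
      nlinarith
    have h2 : ∑ i ∈ sᶜ, d i * c i ≤ ∑ i ∈ sᶜ, t * c i := by
      refine Finset.sum_le_sum fun i hi => ?_
      have := hle_t i (Finset.mem_compl.mp hi)
      have := hc0 i
      nlinarith
    have hcs : ∑ i ∈ s, c i + ∑ i ∈ sᶜ, c i = (M : ℝ) := by
      rw [Finset.sum_add_sum_compl]; exact hsum
    have h3 : ∑ i ∈ s, (d i + t * (c i - 1)) + ∑ i ∈ sᶜ, t * c i = ∑ i ∈ s, d i := by
      rw [Finset.sum_add_distrib, ← Finset.mul_sum, ← Finset.mul_sum,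
        Finset.sum_sub_distrib, Finset.sum_const, hcard, nsmul_eq_mul, mul_one]
      linear_combination t * hcs
    rw [hsplit]
    linarith
end

section
/- The MMSE trace inequality for filter-bank sampling (Appendix E chain of inequalities): Let n be a finite type with decidable equality and M : ℕ. Let h : n → ℂ and x, ν : n → ℝ with 0 ≤ x i and 0 < ν i for every i. Set K := Matrix.diagonal (fun i => ((‖h i‖² * x i + ν i : ℝ) : ℂ)) and D := Matrix.diagonal (fun i => ((‖h i‖² * x i : ℝ) : ℂ)). Let S : Matrix (Fin M) n ℂ be such that S * K * Sᴴ is invertible, and let s be a Finset of n with s.card = M such that (‖h j‖² * x j)/(‖h j‖² * x j + ν j) ≤ (‖h i‖² * x i)/(‖h i‖² * x i + ν i) for every i ∈ s and every j ∉ s. Then the real part of the trace of (S * K * Sᴴ)⁻¹ * (S * D * Sᴴ) is at most ∑_{i ∈ s} (‖h i‖² * x i)/(‖h i‖² * x i + ν i). -/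
open scoped Matrix

lemma key_sum_lemma {n : Type*} [Fintype n] [DecidableEq n] (M : ℕ)
    (p r : n → ℝ) (hp0 : ∀ i, 0 ≤ p i) (hp1 : ∀ i, p i ≤ 1)
    (hsum : ∑ i, p i = M) (s : Finset n) (hcard : s.card = M)
    (hmax : ∀ i ∈ s, ∀ j ∉ s, r j ≤ r i) :
    ∑ i, p i * r i ≤ ∑ i ∈ s, r i := by
  rcases s.eq_empty_or_nonempty with hs | hs
  · subst hs
    simp only [Finset.card_empty] at hcard
    have hM : ∑ i, p i = 0 := by rw [hsum, ← hcard]; simp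
    have hz : ∀ i ∈ Finset.univ, p i = 0 :=
      (Finset.sum_eq_zero_iff_of_nonneg (fun i _ => hp0 i)).1 hM
    have : ∑ i, p i * r i = 0 :=
      Finset.sum_eq_zero fun i hi => by rw [hz i hi, zero_mul]
    simp [this]
  · set m := s.inf' hs r with hm
    have hsplit := Finset.sum_add_sum_compl s (fun i => p i * r i)
    have h1 : ∑ i ∈ s, p i * r i ≤ ∑ i ∈ s, (r i + (p i - 1) * m) := by
      refine Finset.sum_le_sum fun i hi => ?_
      have hmi : m ≤ r i := Finset.inf'_le r hi
      nlinarith [hp1 i]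
    have h2 : ∑ j ∈ sᶜ, p j * r j ≤ ∑ j ∈ sᶜ, p j * m := by
      refine Finset.sum_le_sum fun j hj => ?_
      have hj' : j ∉ s := Finset.mem_compl.1 hj
      have hrj : r j ≤ m := Finset.le_inf' hs r fun i hi => hmax i hi j hj'
      exact mul_le_mul_of_nonneg_left hrj (hp0 j)
    have e1 : ∑ i ∈ s, (r i + (p i - 1) * m)
        = ∑ i ∈ s, r i + (∑ i ∈ s, p i - s.card) * m := by
      rw [Finset.sum_add_distrib, ← Finset.sum_mul, Finset.sum_sub_distrib]
      simp
    have e3 : ∑ i ∈ s, p i + ∑ j ∈ sᶜ, p j = M := by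
      rw [Finset.sum_add_sum_compl]; exact hsum
    have e2 : ∑ j ∈ sᶜ, p j * m = (∑ j ∈ sᶜ, p j) * m := by
      rw [← Finset.sum_mul]
    calc ∑ i, p i * r i = ∑ i ∈ s, p i * r i + ∑ j ∈ sᶜ, p j * r j := hsplit.symm
      _ ≤ (∑ i ∈ s, r i + (∑ i ∈ s, p i - s.card) * m) + (∑ j ∈ sᶜ, p j) * m := by
          rw [← e1, ← e2]; exact add_le_add h1 h2
      _ = ∑ i ∈ s, r i := by
          rw [hcard]
          linear_combination m * e3

/-- The MMSE trace inequality for filter-bank sampling (Appendix E chain of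
inequalities): with `K = diagonal (‖h‖²x + ν)` and `D = diagonal (‖h‖²x)`,
for any `M`-branch filter matrix `S` with `S K Sᴴ` invertible, the trace of
`(S K Sᴴ)⁻¹ (S D Sᴴ)` is at most the sum of the `M` largest values of
`‖h i‖²x i / (‖h i‖²x i + ν i)`. -/
theorem mmse_trace_le_sum_largest
    {n : Type*} [Fintype n] [DecidableEq n] (M : ℕ)
    (h : n → ℂ) (x ν : n → ℝ) (hx : ∀ i, 0 ≤ x i) (hν : ∀ i, 0 < ν i)
    (S : Matrix (Fin M) n ℂ)
    (hinv : IsUnit (S * Matrix.diagonal (fun i => ((‖h i‖ ^ 2 * x i + ν i : ℝ) : ℂ)) * Sᴴ).det)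
    (s : Finset n) (hcard : s.card = M)
    (hmax : ∀ i ∈ s, ∀ j ∉ s,
      (‖h j‖ ^ 2 * x j) / (‖h j‖ ^ 2 * x j + ν j) ≤
        (‖h i‖ ^ 2 * x i) / (‖h i‖ ^ 2 * x i + ν i)) :
    (Matrix.trace
        ((S * Matrix.diagonal (fun i => ((‖h i‖ ^ 2 * x i + ν i : ℝ) : ℂ)) * Sᴴ)⁻¹ *
          (S * Matrix.diagonal (fun i => ((‖h i‖ ^ 2 * x i : ℝ) : ℂ)) * Sᴴ))).re ≤
      ∑ i ∈ s, (‖h i‖ ^ 2 * x i) / (‖h i‖ ^ 2 * x i + ν i) := by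
  classical
  have hb : ∀ i, 0 < ‖h i‖ ^ 2 * x i + ν i := fun i =>
    add_pos_of_nonneg_of_pos (mul_nonneg (sq_nonneg _) (hx i)) (hν i)
  set B : Matrix n n ℂ :=
    Matrix.diagonal (fun i => ((Real.sqrt (‖h i‖ ^ 2 * x i + ν i) : ℝ) : ℂ)) with hBdef
  set R : Matrix n n ℂ :=
    Matrix.diagonal (fun i => (((‖h i‖ ^ 2 * x i) / (‖h i‖ ^ 2 * x i + ν i) : ℝ) : ℂ)) with hRdef
  have hBH : Bᴴ = B := by
    rw [hBdef, Matrix.diagonal_conjTranspose]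
    refine congrArg Matrix.diagonal (funext fun i => ?_)
    simp [Pi.star_apply, Complex.conj_ofReal]
  have hK : Matrix.diagonal (fun i => ((‖h i‖ ^ 2 * x i + ν i : ℝ) : ℂ)) = B * B := by
    rw [hBdef, Matrix.diagonal_mul_diagonal]
    refine congrArg Matrix.diagonal (funext fun i => ?_)
    rw [← Complex.ofReal_mul, Real.mul_self_sqrt (hb i).le]
  have hD : Matrix.diagonal (fun i => ((‖h i‖ ^ 2 * x i : ℝ) : ℂ)) = B * R * B := by
    rw [hBdef, hRdef, Matrix.diagonal_mul_diagonal, Matrix.diagonal_mul_diagonal]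
    refine congrArg Matrix.diagonal (funext fun i => ?_)
    rw [← Complex.ofReal_mul, ← Complex.ofReal_mul]
    congr 1
    have h1 : Real.sqrt (‖h i‖ ^ 2 * x i + ν i) * ((‖h i‖ ^ 2 * x i) / (‖h i‖ ^ 2 * x i + ν i))
        * Real.sqrt (‖h i‖ ^ 2 * x i + ν i)
        = Real.sqrt (‖h i‖ ^ 2 * x i + ν i) * Real.sqrt (‖h i‖ ^ 2 * x i + ν i)
          * ((‖h i‖ ^ 2 * x i) / (‖h i‖ ^ 2 * x i + ν i)) := by ring
    rw [h1, Real.mul_self_sqrt (hb i).le, ← mul_div_assoc,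
      mul_div_cancel_left₀ _ (hb i).ne']
  set W : Matrix (Fin M) n ℂ := S * B with hWdef
  have hT : S * Matrix.diagonal (fun i => ((‖h i‖ ^ 2 * x i + ν i : ℝ) : ℂ)) * Sᴴ = W * Wᴴ := by
    rw [hK, hWdef, Matrix.conjTranspose_mul, hBH]
    simp only [Matrix.mul_assoc]
  have hSD : S * Matrix.diagonal (fun i => ((‖h i‖ ^ 2 * x i : ℝ) : ℂ)) * Sᴴ = W * R * Wᴴ := by
    rw [hD, hWdef, Matrix.conjTranspose_mul, hBH]
    simp only [Matrix.mul_assoc]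
  rw [hT, hSD]
  have hinvT : IsUnit (W * Wᴴ).det := hT ▸ hinv
  have hTT : (W * Wᴴ) * (W * Wᴴ)⁻¹ = 1 := Matrix.mul_nonsing_inv _ hinvT
  have hTT' : (W * Wᴴ)⁻¹ * (W * Wᴴ) = 1 := Matrix.nonsing_inv_mul _ hinvT
  set P : Matrix n n ℂ := Wᴴ * (W * Wᴴ)⁻¹ * W with hPdef
  clear_value B R W P
  -- trace rewrite
  have htrace1 : Matrix.trace ((W * Wᴴ)⁻¹ * (W * R * Wᴴ)) = Matrix.trace (P * R) := by
    rw [show (W * Wᴴ)⁻¹ * (W * R * Wᴴ) = ((W * Wᴴ)⁻¹ * (W * R)) * Wᴴ by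
      simp only [Matrix.mul_assoc], Matrix.trace_mul_comm]
    rw [hPdef]
    congr 1
    simp only [Matrix.mul_assoc]
  -- Hermitian
  have hTHsym : ((W * Wᴴ)⁻¹)ᴴ = (W * Wᴴ)⁻¹ := by
    rw [Matrix.conjTranspose_nonsing_inv, Matrix.conjTranspose_mul,
      Matrix.conjTranspose_conjTranspose]
  have hPH : Pᴴ = P := by
    rw [hPdef]
    simp only [Matrix.conjTranspose_mul, Matrix.conjTranspose_conjTranspose, hTHsym,
      Matrix.mul_assoc]
  -- idempotent
  have hWe : W * (Wᴴ * ((W * Wᴴ)⁻¹ * W)) = W := by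
    rw [← Matrix.mul_assoc W Wᴴ, ← Matrix.mul_assoc, hTT, Matrix.one_mul]
  have hPP : P * P = P := by
    rw [hPdef]
    simp only [Matrix.mul_assoc]
    rw [hWe]
  -- trace of P
  have htraceP : Matrix.trace P = (M : ℂ) := by
    calc Matrix.trace P = Matrix.trace (Wᴴ * ((W * Wᴴ)⁻¹ * W)) := by
          rw [hPdef, Matrix.mul_assoc]
      _ = Matrix.trace (((W * Wᴴ)⁻¹ * W) * Wᴴ) := Matrix.trace_mul_comm _ _
      _ = Matrix.trace ((W * Wᴴ)⁻¹ * (W * Wᴴ)) := by rw [Matrix.mul_assoc]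
      _ = (M : ℂ) := by rw [hTT', Matrix.trace_one]; simp
  -- diagonal entries
  have hPdiag : ∀ i, P i i = ((∑ k, Complex.normSq (P k i) : ℝ) : ℂ) := by
    intro i
    conv_lhs => rw [show P = Pᴴ * P by rw [hPH, hPP]]
    rw [Matrix.mul_apply]
    push_cast
    refine Finset.sum_congr rfl fun k _ => ?_
    rw [Matrix.conjTranspose_apply]
    exact (Complex.normSq_eq_conj_mul_self).symm
  set p : n → ℝ := fun i => (P i i).re with hpdef
  have hpeq : ∀ i, p i = ∑ k, Complex.normSq (P k i) := fun i => by
    rw [hpdef]; simp [hPdiag i]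
  have him : ∀ i, (P i i).im = 0 := fun i => by simp [hPdiag i]
  have hp0 : ∀ i, 0 ≤ p i := fun i => by
    rw [hpeq i]; exact Finset.sum_nonneg fun k _ => Complex.normSq_nonneg _
  have hp1 : ∀ i, p i ≤ 1 := by
    intro i
    have hge : Complex.normSq (P i i) ≤ p i := by
      rw [hpeq i]
      exact Finset.single_le_sum (f := fun k => Complex.normSq (P k i))
        (fun k _ => Complex.normSq_nonneg _) (Finset.mem_univ i)
    rw [Complex.normSq_apply, him i] at hge
    nlinarith [hp0 i]
  have hsum : ∑ i, p i = M := by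
    have := congrArg Complex.re htraceP
    rw [Matrix.trace] at this
    simpa [Complex.re_sum, Matrix.diag] using this
  have htr2 : (Matrix.trace (P * R)).re = ∑ i, p i * (‖h i‖ ^ 2 * x i) / (‖h i‖ ^ 2 * x i + ν i) := by
    rw [Matrix.trace]
    rw [Complex.re_sum]
    refine Finset.sum_congr rfl fun i _ => ?_
    rw [Matrix.diag, hRdef, Matrix.mul_diagonal, Complex.mul_re, Complex.ofReal_re,
      Complex.ofReal_im, mul_zero, sub_zero]
    simp only [hpdef]
    ring
  rw [htrace1, htr2]
  have := key_sum_lemma M p (fun i => (‖h i‖ ^ 2 * x i) / (‖h i‖ ^ 2 * x i + ν i))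
    hp0 hp1 hsum s hcard hmax
  calc ∑ i, p i * (‖h i‖ ^ 2 * x i) / (‖h i‖ ^ 2 * x i + ν i)
      = ∑ i, p i * ((‖h i‖ ^ 2 * x i) / (‖h i‖ ^ 2 * x i + ν i)) := by
        refine Finset.sum_congr rfl fun i _ => ?_; ring
    _ ≤ _ := this
end

section
/- Asymptotic equivalence of the Gram matrix of a block-Toeplitz channel matrix with its Toeplitz extension (Lemma 5): Fix k : ℕ with k ≥ 1, a constant ε > 1, and h : ℤ → (Fin k → ℂ). Write a i := ∑_{m : Fin k} ‖h i m‖ for the ℓ¹-norm of the i-th block. Assume the family i ↦ a i is summable, and that h decays as o(|i|^{−ε}): for every δ > 0 there exists T such that a i ≤ δ · |i|^{−ε} whenever |i| ≥ T. For each n ≥ 1 define A_n, B_n : Matrix (Fin n) (Fin n) ℂ by (A_n)_{i j} = ∑_{l = 0}^{n−1} ∑_{m : Fin k} h ((i:ℤ) − l) m · conj (h ((j:ℤ) − l) m) and (B_n)_{i j} = ∑'_{l : ℤ} ∑_{m : Fin k} h ((i:ℤ) − l) m · conj (h ((j:ℤ) − l) m). Then (i) (1/n) · ‖B_n − A_n‖_F²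 → 0 as n → ∞, where ‖·‖_F is the Frobenius norm, and (ii) there exists a constant c′ such that for all n, the ℓ²-operator norms of A_n and B_n are both at most c′. -/
open scoped Matrix

/-- The truncated Gram matrix `A_n = H̃ⁿ (H̃ⁿ)*` of the discretized block-Toeplitz
channel matrix, with entries `∑_{l=0}^{n-1} ∑_m h(i−l)_m conj (h(j−l)_m)`. -/
noncomputable def gramTrunc (k : ℕ) (h : ℤ → Fin k → ℂ) (n : ℕ) :
    Matrix (Fin n) (Fin n) ℂ :=
  Matrix.of fun i j : Fin n =>
    ∑ l ∈ Finset.range n, ∑ m : Fin k,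
      h ((i : ℤ) - (l : ℤ)) m * (starRingEnd ℂ) (h ((j : ℤ) - (l : ℤ)) m)

/-- The Hermitian Toeplitz extension `B_n = Ĥⁿ`, with entries
`∑'_{l ∈ ℤ} ∑_m h(i−l)_m conj (h(j−l)_m)`. -/
noncomputable def gramToeplitz (k : ℕ) (h : ℤ → Fin k → ℂ) (n : ℕ) :
    Matrix (Fin n) (Fin n) ℂ :=
  Matrix.of fun i j : Fin n =>
    ∑' l : ℤ, ∑ m : Fin k,
      h ((i : ℤ) - l) m * (starRingEnd ℂ) (h ((j : ℤ) - l) m)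




/-- Cauchy–Schwarz for tsums over ℕ (nonnegative case). -/
lemma tsum_cs (f g : ℕ → ℝ) (hf0 : ∀ q, 0 ≤ f q) (hg0 : ∀ q, 0 ≤ g q)
    (hf2 : Summable fun q => f q ^ 2) (hg2 : Summable fun q => g q ^ 2) :
    ∑' q, f q * g q ≤ Real.sqrt (∑' q, f q ^ 2) * Real.sqrt (∑' q, g q ^ 2) := by
  have hfg : Summable fun q => f q * g q := by
    refine Summable.of_nonneg_of_le (fun q => mul_nonneg (hf0 q) (hg0 q)) (fun q => ?_)
      ((hf2.add hg2).div_const 2)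
    nlinarith [sq_nonneg (f q - g q)]
  refine hfg.tsum_le_of_sum_le fun s => ?_
  refine (Real.sum_mul_le_sqrt_mul_sqrt s f g).trans ?_
  have h1 : ∑ q ∈ s, f q ^ 2 ≤ ∑' q, f q ^ 2 := hf2.sum_le_tsum s (fun q _ => sq_nonneg _)
  have h2 : ∑ q ∈ s, g q ^ 2 ≤ ∑' q, g q ^ 2 := hg2.sum_le_tsum s (fun q _ => sq_nonneg _)
  exact mul_le_mul (Real.sqrt_le_sqrt h1) (Real.sqrt_le_sqrt h2) (Real.sqrt_nonneg _)
    (Real.sqrt_nonneg _)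

/-- Schur test for matrices dominated by a Toeplitz family. -/
lemma schur_test {n : ℕ} (M : Matrix (Fin n) (Fin n) ℂ) (c : ℤ → ℝ)
    (hc0 : ∀ d, 0 ≤ c d) (hM : ∀ i j : Fin n, ‖M i j‖ ≤ c ((i : ℤ) - (j : ℤ)))
    (K : ℝ) (hK : 0 ≤ K)
    (hrow : ∀ i : Fin n, ∑ j : Fin n, c ((i : ℤ) - (j : ℤ)) ≤ K)
    (hcol : ∀ j : Fin n, ∑ i : Fin n, c ((i : ℤ) - (j : ℤ)) ≤ K) :
    ‖Matrix.toEuclideanCLM (𝕜 := ℂ) M‖ ≤ K := by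
  refine ContinuousLinearMap.opNorm_le_bound _ hK fun x => ?_
  have hx : ∀ i : Fin n, (Matrix.toEuclideanCLM (𝕜 := ℂ) M x) i = ∑ j : Fin n, M i j * x j := by
    intro i
    have := Matrix.ofLp_toEuclideanCLM (𝕜 := ℂ) M x
    have h2 : (Matrix.toEuclideanCLM (𝕜 := ℂ) M x) i
        = (Matrix.toLin' M (WithLp.equiv 2 (Fin n → ℂ) x)) i := by
      rfl
    rw [h2, Matrix.toLin'_apply]
    simp [Matrix.mulVec, dotProduct]
  have key : ∑ i : Fin n, ‖(Matrix.toEuclideanCLM (𝕜 := ℂ) M x) i‖ ^ 2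
      ≤ K ^ 2 * ∑ j : Fin n, ‖x j‖ ^ 2 := by
    have step1 : ∀ i : Fin n, ‖(Matrix.toEuclideanCLM (𝕜 := ℂ) M x) i‖
        ≤ ∑ j : Fin n, c ((i : ℤ) - (j : ℤ)) * ‖x j‖ := by
      intro i
      rw [hx i]
      refine (norm_sum_le _ _).trans (Finset.sum_le_sum fun j _ => ?_)
      rw [norm_mul]
      exact mul_le_mul_of_nonneg_right (hM i j) (norm_nonneg _)
    have step2 : ∀ i : Fin n, (∑ j : Fin n, c ((i : ℤ) - (j : ℤ)) * ‖x j‖) ^ 2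
        ≤ K * ∑ j : Fin n, c ((i : ℤ) - (j : ℤ)) * ‖x j‖ ^ 2 := by
      intro i
      have cs := Finset.sum_mul_sq_le_sq_mul_sq Finset.univ
        (fun j : Fin n => Real.sqrt (c ((i : ℤ) - (j : ℤ))))
        (fun j : Fin n => Real.sqrt (c ((i : ℤ) - (j : ℤ))) * ‖x j‖)
      have e1 : ∀ j : Fin n, Real.sqrt (c ((i : ℤ) - (j : ℤ)))
          * (Real.sqrt (c ((i : ℤ) - (j : ℤ))) * ‖x j‖)
          = c ((i : ℤ) - (j : ℤ)) * ‖x j‖ := fun j => by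
        rw [← mul_assoc, Real.mul_self_sqrt (hc0 _)]
      have e2 : ∀ j : Fin n, Real.sqrt (c ((i : ℤ) - (j : ℤ))) ^ 2
          = c ((i : ℤ) - (j : ℤ)) := fun j => Real.sq_sqrt (hc0 _)
      have e3 : ∀ j : Fin n, (Real.sqrt (c ((i : ℤ) - (j : ℤ))) * ‖x j‖) ^ 2
          = c ((i : ℤ) - (j : ℤ)) * ‖x j‖ ^ 2 := fun j => by
        rw [mul_pow, e2]
      simp only [e1, e2, e3] at cs
      refine cs.trans ?_
      exact mul_le_mul_of_nonneg_right (hrow i)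
        (Finset.sum_nonneg fun j _ => mul_nonneg (hc0 _) (sq_nonneg _))
    calc ∑ i : Fin n, ‖(Matrix.toEuclideanCLM (𝕜 := ℂ) M x) i‖ ^ 2
        ≤ ∑ i : Fin n, K * ∑ j : Fin n, c ((i : ℤ) - (j : ℤ)) * ‖x j‖ ^ 2 := by
          refine Finset.sum_le_sum fun i _ => ?_
          exact (pow_le_pow_left₀ (norm_nonneg _) (step1 i) 2).trans (step2 i)
      _ = K * ∑ j : Fin n, (∑ i : Fin n, c ((i : ℤ) - (j : ℤ))) * ‖x j‖ ^ 2 := by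
          rw [← Finset.mul_sum, Finset.sum_comm]
          congr 1
          exact Finset.sum_congr rfl fun j _ => by rw [Finset.sum_mul]
      _ ≤ K * ∑ j : Fin n, K * ‖x j‖ ^ 2 := by
          refine mul_le_mul_of_nonneg_left (Finset.sum_le_sum fun j _ => ?_) hK
          exact mul_le_mul_of_nonneg_right (hcol j) (sq_nonneg _)
      _ = K ^ 2 * ∑ j : Fin n, ‖x j‖ ^ 2 := by rw [← Finset.mul_sum]; ring
  have hnorm1 : ‖Matrix.toEuclideanCLM (𝕜 := ℂ) M x‖
      = Real.sqrt (∑ i : Fin n, ‖(Matrix.toEuclideanCLM (𝕜 := ℂ) M x) i‖ ^ 2) :=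
    EuclideanSpace.norm_eq _
  have hnorm2 : ‖x‖ = Real.sqrt (∑ j : Fin n, ‖x j‖ ^ 2) := EuclideanSpace.norm_eq _
  rw [hnorm1, hnorm2]
  calc Real.sqrt (∑ i : Fin n, ‖(Matrix.toEuclideanCLM (𝕜 := ℂ) M x) i‖ ^ 2)
      ≤ Real.sqrt (K ^ 2 * ∑ j : Fin n, ‖x j‖ ^ 2) := Real.sqrt_le_sqrt key
    _ = K * Real.sqrt (∑ j : Fin n, ‖x j‖ ^ 2) := by
        rw [Real.sqrt_mul (sq_nonneg K), Real.sqrt_sq hK]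

namespace GramAux

noncomputable def blk {k : ℕ} (h : ℤ → Fin k → ℂ) (i : ℤ) : ℝ := ∑ m : Fin k, ‖h i m‖

noncomputable def ent {k : ℕ} (h : ℤ → Fin k → ℂ) (i j l : ℤ) : ℂ :=
  ∑ m : Fin k, h (i - l) m * (starRingEnd ℂ) (h (j - l) m)

section Copied


lemma summable_tail (ε : ℝ) (hε : 1 < ε) (b : ℕ → ℝ) (hb0 : ∀ p, 0 ≤ b p)
    (hb2 : Summable fun p => b p ^ 2) (T : ℕ)
    (hdec : ∀ p : ℕ, T ≤ p → b p ≤ (p : ℝ) ^ (-ε)) :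
    Summable fun i : ℕ => ∑' q : ℕ, b (i + 1 + q) ^ 2 := by
  have hεneg : -ε < -1 := by linarith
  have hC : Summable fun q : ℕ => ((q : ℝ) + 1) ^ (-ε) := by
    have h1 : Summable fun q : ℕ => ((q + 1 : ℕ) : ℝ) ^ (-ε) :=
      (summable_nat_add_iff 1).mpr (Real.summable_nat_rpow.mpr hεneg)
    have : (fun q : ℕ => ((q + 1 : ℕ) : ℝ) ^ (-ε))
        = fun q : ℕ => ((q : ℝ) + 1) ^ (-ε) := by
      funext q; push_cast; ring_nf
    rwa [this] at h1
  set C := ∑' q : ℕ, ((q : ℝ) + 1) ^ (-ε) with hCdef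
  have hC0 : 0 ≤ C := tsum_nonneg fun q => Real.rpow_nonneg (by positivity) _
  have key : ∀ i : ℕ, T ≤ i → ∀ q : ℕ,
      b (i + 1 + q) ^ 2 ≤ ((i : ℝ) + 1) ^ (-ε) * (((q : ℝ) + 1) ^ (-ε)) := by
    intro i hi q
    have hp : T ≤ i + 1 + q := by omega
    have h1 : b (i + 1 + q) ≤ ((i + 1 + q : ℕ) : ℝ) ^ (-ε) := hdec _ hp
    have hppos : (0 : ℝ) < ((i + 1 + q : ℕ) : ℝ) := by positivity
    have h2 : b (i + 1 + q) ^ 2 ≤ (((i + 1 + q : ℕ) : ℝ) ^ (-ε)) ^ 2 :=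
      pow_le_pow_left₀ (hb0 _) h1 2
    have h3 : (((i + 1 + q : ℕ) : ℝ) ^ (-ε)) ^ 2
        = (((i + 1 + q : ℕ) : ℝ) ^ (2 : ℝ)) ^ (-ε) := by
      rw [← Real.rpow_natCast (((i + 1 + q : ℕ) : ℝ) ^ (-ε)) 2,
        ← Real.rpow_mul hppos.le, ← Real.rpow_mul hppos.le]
      norm_num [mul_comm]
    have h4 : ((i : ℝ) + 1) * ((q : ℝ) + 1) ≤ ((i + 1 + q : ℕ) : ℝ) ^ (2 : ℝ) := by
      have : ((i + 1 + q : ℕ) : ℝ) ^ (2 : ℝ) = ((i + 1 + q : ℕ) : ℝ) ^ (2 : ℕ) := by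
        rw [← Real.rpow_natCast _ 2]; norm_num
      rw [this]
      push_cast
      nlinarith [Nat.cast_nonneg (α := ℝ) i, Nat.cast_nonneg (α := ℝ) q]
    have h5 : (((i + 1 + q : ℕ) : ℝ) ^ (2 : ℝ)) ^ (-ε)
        ≤ (((i : ℝ) + 1) * ((q : ℝ) + 1)) ^ (-ε) :=
      Real.rpow_le_rpow_of_nonpos (by positivity) h4 (by linarith)
    have h6 : (((i : ℝ) + 1) * ((q : ℝ) + 1)) ^ (-ε)
        = ((i : ℝ) + 1) ^ (-ε) * ((q : ℝ) + 1) ^ (-ε) :=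
      Real.mul_rpow (by positivity) (by positivity)
    calc b (i + 1 + q) ^ 2 ≤ (((i + 1 + q : ℕ) : ℝ) ^ (-ε)) ^ 2 := h2
      _ = (((i + 1 + q : ℕ) : ℝ) ^ (2 : ℝ)) ^ (-ε) := h3
      _ ≤ (((i : ℝ) + 1) * ((q : ℝ) + 1)) ^ (-ε) := h5
      _ = _ := h6
  have hsq : ∀ i : ℕ, Summable fun q : ℕ => b (i + 1 + q) ^ 2 := by
    intro i
    exact hb2.comp_injective (add_right_injective (i + 1))
  have hG : ∀ i : ℕ, T ≤ i → (∑' q : ℕ, b (i + 1 + q) ^ 2) ≤ ((i : ℝ) + 1) ^ (-ε) * C := by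
    intro i hi
    calc (∑' q : ℕ, b (i + 1 + q) ^ 2)
        ≤ ∑' q : ℕ, ((i : ℝ) + 1) ^ (-ε) * (((q : ℝ) + 1) ^ (-ε)) :=
          Summable.tsum_le_tsum (key i hi) (hsq i) (hC.mul_left _)
      _ = ((i : ℝ) + 1) ^ (-ε) * C := tsum_mul_left
  refine (summable_nat_add_iff T).mp ?_
  refine Summable.of_nonneg_of_le (fun i => tsum_nonneg fun q => sq_nonneg _)
    (fun i => ?_) (hC.mul_right C)
  have h1 := hG (i + T) (by omega)
  refine h1.trans ?_
  refine mul_le_mul_of_nonneg_right ?_ hC0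
  exact Real.rpow_le_rpow_of_nonpos (by positivity) (by push_cast; linarith [Nat.cast_nonneg (α := ℝ) T]) (by linarith)

lemma tsum_set_neg (g : ℤ → ℝ) :
    ∑' l : ↥{l : ℤ | l < 0}, g ↑l = ∑' q : ℕ, g (-1 - (q : ℤ)) := by
  let e : ℕ ≃ {l : ℤ | l < 0} :=
    { toFun := fun q => ⟨-1 - (q : ℤ), by simp only [Set.mem_setOf_eq]; omega⟩
      invFun := fun l => (-1 - l.1).toNat
      left_inv := fun q => by simp
      right_inv := fun l => by
        ext
        have := l.2
        simp only [Set.mem_setOf_eq] at this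
        simp
        omega }
  rw [← e.tsum_eq]
  rfl

lemma tsum_set_ge (N : ℤ) (g : ℤ → ℝ) :
    ∑' l : ↥{l : ℤ | N ≤ l}, g ↑l = ∑' q : ℕ, g (N + (q : ℤ)) := by
  let e : ℕ ≃ {l : ℤ | N ≤ l} :=
    { toFun := fun q => ⟨N + (q : ℤ), by simp only [Set.mem_setOf_eq]; omega⟩
      invFun := fun l => (l.1 - N).toNat
      left_inv := fun q => by simp
      right_inv := fun l => by
        ext
        have := l.2
        simp only [Set.mem_setOf_eq] at this
        simp
        omega }
  rw [← e.tsum_eq]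
  rfl

lemma compl_Ico_set (n : ℕ) :
    (↑(Finset.Ico (0 : ℤ) (n : ℤ)) : Set ℤ)ᶜ = {l : ℤ | l < 0} ∪ {l : ℤ | (n : ℤ) ≤ l} := by
  ext l
  simp only [Finset.coe_Ico, Set.mem_compl_iff, Set.mem_Ico, Set.mem_union, Set.mem_setOf_eq]
  omega

lemma sum_range_castIco (f : ℤ → ℂ) (n : ℕ) :
    ∑ l ∈ Finset.range n, f (l : ℤ) = ∑ l ∈ Finset.Ico (0 : ℤ) (n : ℤ), f l := by
  have himg : Finset.Ico (0 : ℤ) (n : ℤ) = (Finset.range n).image (fun l : ℕ => (l : ℤ)) := by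
    ext x
    simp only [Finset.mem_Ico, Finset.mem_image, Finset.mem_range]
    constructor
    · intro hx; exact ⟨x.toNat, by omega, by omega⟩
    · rintro ⟨l, hl, rfl⟩; omega
  rw [himg, Finset.sum_image (fun a _ b _ hab => by exact_mod_cast hab)]

end Copied

variable {k : ℕ} (h : ℤ → Fin k → ℂ)


lemma blk_nonneg (i : ℤ) : 0 ≤ blk h i :=
  Finset.sum_nonneg fun _ _ => norm_nonneg _

lemma norm_ent_le (i j l : ℤ) : ‖ent h i j l‖ ≤ blk h (i - l) * blk h (j - l) := by
  refine (norm_sum_le _ _).trans ?_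
  have : ∀ m : Fin k, ‖h (i - l) m * (starRingEnd ℂ) (h (j - l) m)‖
      ≤ ‖h (i - l) m‖ * blk h (j - l) := by
    intro m
    rw [norm_mul, RingHomIsometric.norm_map]
    exact mul_le_mul_of_nonneg_left
      (Finset.single_le_sum (fun m' _ => norm_nonneg (h (j - l) m')) (Finset.mem_univ m))
      (norm_nonneg _)
  refine (Finset.sum_le_sum fun m _ => this m).trans ?_
  rw [← Finset.sum_mul]
  exact le_rfl

lemma summable_blk_shift (hsum : Summable (blk h)) (c : ℤ) :
    Summable fun l : ℤ => blk h (c - l) := by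
  have := hsum.comp_injective (Equiv.subLeft c).injective
  exact this

lemma blk_le_S (hsum : Summable (blk h)) (i : ℤ) : blk h i ≤ ∑' i, blk h i :=
  hsum.le_tsum i fun j _ => blk_nonneg h j

lemma summable_prodblk (hsum : Summable (blk h)) (i j : ℤ) :
    Summable fun l : ℤ => blk h (i - l) * blk h (j - l) := by
  refine Summable.of_nonneg_of_le (fun l => mul_nonneg (blk_nonneg h _) (blk_nonneg h _))
    (fun l => mul_le_mul_of_nonneg_right (blk_le_S h hsum _) (blk_nonneg h _))
    (((summable_blk_shift h hsum j).mul_left _))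

lemma summable_ent (hsum : Summable (blk h)) (i j : ℤ) :
    Summable fun l : ℤ => ent h i j l :=
  Summable.of_norm_bounded (summable_prodblk h hsum i j) (norm_ent_le h i j)

lemma summable_blksq (hsum : Summable (blk h)) : Summable fun i : ℤ => blk h i ^ 2 := by
  refine Summable.of_nonneg_of_le (fun i => sq_nonneg _) (fun i => ?_)
    (hsum.mul_left (∑' i, blk h i))
  rw [sq]
  exact mul_le_mul_of_nonneg_right (blk_le_S h hsum i) (blk_nonneg h i)


variable {k : ℕ} (h : ℤ → Fin k → ℂ)

lemma gramTrunc_eq (n : ℕ) (i j : Fin n) :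
    gramTrunc k h n i j = ∑ l ∈ Finset.Ico (0 : ℤ) (n : ℤ), ent h i j l := by
  simp only [gramTrunc, Matrix.of_apply]
  exact sum_range_castIco (fun l => ent h (i : ℤ) (j : ℤ) l) n

lemma gramToeplitz_eq (n : ℕ) (i j : Fin n) :
    gramToeplitz k h n i j = ∑' l : ℤ, ent h i j l := rfl

lemma diff_eq (hsum : Summable (blk h)) (n : ℕ) (i j : Fin n) :
    gramToeplitz k h n i j - gramTrunc k h n i j
      = ∑' l : ↥((↑(Finset.Ico (0 : ℤ) (n : ℤ)) : Set ℤ)ᶜ), ent h i j ↑l := by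
  have h1 := Summable.sum_add_tsum_compl (s := Finset.Ico (0 : ℤ) (n : ℤ))
    (summable_ent h hsum i j)
  rw [gramTrunc_eq, gramToeplitz_eq, ← h1]
  ring

lemma norm_diff_le (hsum : Summable (blk h)) (n : ℕ) (i j : Fin n) :
    ‖gramToeplitz k h n i j - gramTrunc k h n i j‖ ≤
      (∑' q : ℕ, blk h (((i : ℤ) + 1) + q) * blk h (((j : ℤ) + 1) + q))
      + ∑' q : ℕ, blk h (((i : ℤ) - (n : ℤ)) - q) * blk h (((j : ℤ) - (n : ℤ)) - q) := by
  have hprod := summable_prodblk h hsum (i : ℤ) (j : ℤ)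
  set g : ℤ → ℝ := fun l => blk h ((i : ℤ) - l) * blk h ((j : ℤ) - l) with hg
  have hgs : ∀ s : Set ℤ, Summable (g ∘ (↑) : s → ℝ) := fun s => hprod.subtype s
  rw [diff_eq h hsum n i j]
  have hnorm : Summable (fun l : ↥((↑(Finset.Ico (0 : ℤ) (n : ℤ)) : Set ℤ)ᶜ) => ‖ent h i j ↑l‖) := by
    refine Summable.of_nonneg_of_le (fun l => norm_nonneg _) (fun l => norm_ent_le h _ _ _)
      (hgs _)
  refine (norm_tsum_le_tsum_norm hnorm).trans ?_
  have h2 : ∑' l : ↥((↑(Finset.Ico (0 : ℤ) (n : ℤ)) : Set ℤ)ᶜ), ‖ent h i j ↑l‖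
      ≤ ∑' l : ↥((↑(Finset.Ico (0 : ℤ) (n : ℤ)) : Set ℤ)ᶜ), g ↑l :=
    Summable.tsum_le_tsum (fun l => norm_ent_le h _ _ _) hnorm (hgs _)
  refine h2.trans ?_
  rw [compl_Ico_set n]
  rw [Summable.tsum_union_disjoint (f := g) ?hd (hgs _) (hgs _)]
  · rw [tsum_set_neg g, tsum_set_ge (n : ℤ) g]
    have e1 : ∀ q : ℕ, g (-1 - (q : ℤ))
        = blk h (((i : ℤ) + 1) + q) * blk h (((j : ℤ) + 1) + q) := by
      intro q
      simp only [hg]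
      rw [show (i : ℤ) - (-1 - (q : ℤ)) = ((i : ℤ) + 1) + q by ring,
        show (j : ℤ) - (-1 - (q : ℤ)) = ((j : ℤ) + 1) + q by ring]
    have e2 : ∀ q : ℕ, g ((n : ℤ) + (q : ℤ))
        = blk h (((i : ℤ) - (n : ℤ)) - q) * blk h (((j : ℤ) - (n : ℤ)) - q) := by
      intro q
      simp only [hg]
      rw [show (i : ℤ) - ((n : ℤ) + (q : ℤ)) = ((i : ℤ) - (n : ℤ)) - q by ring,
        show (j : ℤ) - ((n : ℤ) + (q : ℤ)) = ((j : ℤ) - (n : ℤ)) - q by ring]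
    rw [tsum_congr e1, tsum_congr e2]
  case hd =>
    rw [Set.disjoint_left]
    intro l hl1 hl2
    simp only [Set.mem_setOf_eq] at hl1 hl2
    omega

noncomputable def cT {k : ℕ} (h : ℤ → Fin k → ℂ) (d : ℤ) : ℝ :=
  ∑' l : ℤ, blk h (d + l) * blk h l

lemma summable_c_inner (hsum : Summable (blk h)) (d : ℤ) :
    Summable fun l : ℤ => blk h (d + l) * blk h l := by
  refine Summable.of_nonneg_of_le (fun l => mul_nonneg (blk_nonneg h _) (blk_nonneg h _))
    (fun l => mul_le_mul_of_nonneg_right (blk_le_S h hsum _) (blk_nonneg h _))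
    (hsum.mul_left _)

lemma cT_nonneg (d : ℤ) : 0 ≤ cT h d :=
  tsum_nonneg fun l => mul_nonneg (blk_nonneg h _) (blk_nonneg h _)

lemma tsum_prod_eq (i j : ℤ) :
    ∑' l : ℤ, blk h (i - l) * blk h (j - l) = cT h (i - j) := by
  have e := (Equiv.subLeft j).tsum_eq (fun l : ℤ => blk h ((i - j) + l) * blk h l)
  rw [cT, ← e]
  refine tsum_congr fun x => ?_
  simp only [Equiv.subLeft_apply]
  rw [show i - j + (j - x) = i - x by ring]

lemma sum_cT_le (hsum : Summable (blk h)) (s : Finset ℤ) :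
    ∑ d ∈ s, cT h d ≤ (∑' i, blk h i) ^ 2 := by
  set S := ∑' i, blk h i with hS
  have h1 : ∑ d ∈ s, cT h d = ∑' l : ℤ, ∑ d ∈ s, blk h (d + l) * blk h l :=
    (Summable.tsum_finsetSum fun d _ => summable_c_inner h hsum d).symm
  rw [h1]
  have h2 : ∀ l : ℤ, ∑ d ∈ s, blk h (d + l) * blk h l ≤ S * blk h l := by
    intro l
    rw [← Finset.sum_mul]
    refine mul_le_mul_of_nonneg_right ?_ (blk_nonneg h l)
    have himg : ∑ d ∈ s, blk h (d + l) = ∑ x ∈ s.image (· + l), blk h x :=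
      (Finset.sum_image fun a _ b _ hab => by omega).symm
    rw [himg]
    exact hsum.sum_le_tsum _ (fun x _ => blk_nonneg h x)
  have h3 : Summable fun l : ℤ => ∑ d ∈ s, blk h (d + l) * blk h l :=
    summable_sum fun d _ => summable_c_inner h hsum d
  calc ∑' l : ℤ, ∑ d ∈ s, blk h (d + l) * blk h l
      ≤ ∑' l : ℤ, S * blk h l := Summable.tsum_le_tsum h2 h3 (hsum.mul_left S)
    _ = S * S := by rw [tsum_mul_left]
    _ = S ^ 2 := (sq S).symm

lemma fin_sum_cT_row (hsum : Summable (blk h)) (n : ℕ) (i : Fin n) :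
    ∑ j : Fin n, cT h ((i : ℤ) - (j : ℤ)) ≤ (∑' i, blk h i) ^ 2 := by
  have hinj : ∀ a ∈ Finset.univ, ∀ b ∈ Finset.univ,
      (fun j : Fin n => (i : ℤ) - (j : ℤ)) a = (fun j : Fin n => (i : ℤ) - (j : ℤ)) b → a = b := by
    intro a _ b _ hab
    simp only at hab
    exact Fin.ext (by omega)
  have := Finset.sum_image (f := cT h) (g := fun j : Fin n => (i : ℤ) - (j : ℤ))
    (s := Finset.univ) hinj
  rw [← this]
  exact sum_cT_le h hsum _

lemma fin_sum_cT_col (hsum : Summable (blk h)) (n : ℕ) (j : Fin n) :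
    ∑ i : Fin n, cT h ((i : ℤ) - (j : ℤ)) ≤ (∑' i, blk h i) ^ 2 := by
  have hinj : ∀ a ∈ Finset.univ, ∀ b ∈ Finset.univ,
      (fun i : Fin n => (i : ℤ) - (j : ℤ)) a = (fun i : Fin n => (i : ℤ) - (j : ℤ)) b → a = b := by
    intro a _ b _ hab
    simp only at hab
    exact Fin.ext (by omega)
  have := Finset.sum_image (f := cT h) (g := fun i : Fin n => (i : ℤ) - (j : ℤ))
    (s := Finset.univ) hinj
  rw [← this]
  exact sum_cT_le h hsum _

lemma norm_gramTrunc_le (hsum : Summable (blk h)) (n : ℕ) (i j : Fin n) :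
    ‖gramTrunc k h n i j‖ ≤ cT h ((i : ℤ) - (j : ℤ)) := by
  rw [gramTrunc_eq]
  refine (norm_sum_le _ _).trans ?_
  refine (Finset.sum_le_sum fun l _ => norm_ent_le h (i : ℤ) (j : ℤ) l).trans ?_
  rw [← tsum_prod_eq h (i : ℤ) (j : ℤ)]
  exact (summable_prodblk h hsum _ _).sum_le_tsum _ (fun l _ => mul_nonneg (blk_nonneg h _) (blk_nonneg h _))

lemma norm_gramToeplitz_le (hsum : Summable (blk h)) (n : ℕ) (i j : Fin n) :
    ‖gramToeplitz k h n i j‖ ≤ cT h ((i : ℤ) - (j : ℤ)) := by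
  rw [gramToeplitz_eq]
  have hnorm : Summable fun l : ℤ => ‖ent h (i : ℤ) (j : ℤ) l‖ :=
    Summable.of_nonneg_of_le (fun l => norm_nonneg _) (fun l => norm_ent_le h _ _ _)
      (summable_prodblk h hsum _ _)
  refine (norm_tsum_le_tsum_norm hnorm).trans ?_
  rw [← tsum_prod_eq h (i : ℤ) (j : ℤ)]
  exact Summable.tsum_le_tsum (fun l => norm_ent_le h _ _ _) hnorm (summable_prodblk h hsum _ _)

lemma double_sum_eq {n : ℕ} (u v : Fin n → ℝ) :
    ∑ i : Fin n, ∑ j : Fin n, (2 * (u i * u j) + 2 * (v i * v j))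
      = 2 * (∑ i : Fin n, u i) ^ 2 + 2 * (∑ i : Fin n, v i) ^ 2 := by
  have e1 : ∀ i : Fin n, ∑ j : Fin n, (2 * (u i * u j) + 2 * (v i * v j))
      = 2 * u i * (∑ j : Fin n, u j) + 2 * v i * (∑ j : Fin n, v j) := by
    intro i
    rw [Finset.sum_add_distrib, Finset.mul_sum, Finset.mul_sum]
    congr 1 <;> exact Finset.sum_congr rfl fun j _ => by ring
  rw [Finset.sum_congr rfl fun i _ => e1 i, Finset.sum_add_distrib,
    ← Finset.sum_mul, ← Finset.sum_mul]
  have e2 : ∑ i : Fin n, 2 * u i = 2 * ∑ i : Fin n, u i := by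
    rw [Finset.mul_sum]
  have e3 : ∑ i : Fin n, 2 * v i = 2 * ∑ i : Fin n, v i := by
    rw [Finset.mul_sum]
  rw [e2, e3]
  ring

end GramAux


open GramAux in
/-- Asymptotic equivalence of the Gram matrix of a block-Toeplitz channel
matrix with its Toeplitz extension (Lemma 5): under ℓ¹-summability and
`o(|i|^{-ε})` decay (ε > 1) of the block ℓ¹-norms, the normalized squared
Frobenius norm of the difference tends to `0`, and the ℓ²-operator norms of
both sequences are uniformly bounded. -/
theorem gramToeplitz_asymptotically_equivalent_gramTrunc
    (k : ℕ) (hk : 1 ≤ k) (ε : ℝ) (hε : 1 < ε) (h : ℤ → Fin k → ℂ)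
    (hsum : Summable (fun i : ℤ => ∑ m : Fin k, ‖h i m‖))
    (hdecay : ∀ δ : ℝ, 0 < δ → ∃ T : ℝ, ∀ i : ℤ, T ≤ |(i : ℝ)| →
      (∑ m : Fin k, ‖h i m‖) ≤ δ * |(i : ℝ)| ^ (-ε)) :
    Filter.Tendsto
      (fun n : ℕ => (1 / (n : ℝ)) *
        ∑ i : Fin n, ∑ j : Fin n,
          ‖gramToeplitz k h n i j - gramTrunc k h n i j‖ ^ 2)
      Filter.atTop (nhds 0) ∧
    ∃ c' : ℝ, ∀ n : ℕ,
      ‖Matrix.toEuclideanCLM (𝕜 := ℂ) (gramTrunc k h n)‖ ≤ c' ∧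
      ‖Matrix.toEuclideanCLM (𝕜 := ℂ) (gramToeplitz k h n)‖ ≤ c' := by
  have hsum' : Summable (blk h) := hsum
  constructor
  · -- part (i)
    obtain ⟨T₀, hT₀⟩ := hdecay 1 one_pos
    obtain ⟨T, hT⟩ := exists_nat_ge T₀
    set bA : ℕ → ℝ := fun p => blk h (p : ℤ) with hbA
    set bB : ℕ → ℝ := fun p => blk h (-(p : ℤ)) with hbB
    have hdecA : ∀ p : ℕ, T ≤ p → bA p ≤ (p : ℝ) ^ (-ε) := by
      intro p hp
      have habs : |(((p : ℤ) : ℝ))| = (p : ℝ) := by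
        push_cast; exact abs_of_nonneg (Nat.cast_nonneg p)
      have h1 : T₀ ≤ |(((p : ℤ) : ℝ))| := by
        rw [habs]; exact hT.trans (Nat.cast_le.mpr hp)
      have := hT₀ (p : ℤ) h1
      rw [habs] at this
      simpa [hbA, blk] using this
    have hdecB : ∀ p : ℕ, T ≤ p → bB p ≤ (p : ℝ) ^ (-ε) := by
      intro p hp
      have habs : |((-(p : ℤ) : ℝ))| = (p : ℝ) := by
        push_cast; rw [abs_neg]; exact abs_of_nonneg (Nat.cast_nonneg p)
      have h1 : T₀ ≤ |((-(p : ℤ) : ℝ))| := by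
        rw [habs]; exact hT.trans (Nat.cast_le.mpr hp)
      have := hT₀ (-(p : ℤ)) (by push_cast at h1 ⊢; exact h1)
      have h2 : |((-(p : ℤ) : ℤ) : ℝ)| = (p : ℝ) := by push_cast; simpa using habs
      rw [h2] at this
      simpa [hbB, blk] using this
    have hb2A : Summable fun p : ℕ => bA p ^ 2 :=
      (summable_blksq h hsum').comp_injective (fun x y hxy => by omega)
    have hb2B : Summable fun p : ℕ => bB p ^ 2 := by
      refine (summable_blksq h hsum').comp_injective (fun x y hxy => ?_)
      omega
    have hGA : Summable fun i : ℕ => ∑' q : ℕ, bA (i + 1 + q) ^ 2 :=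
      summable_tail ε hε bA (fun p => blk_nonneg h _) hb2A T hdecA
    have hGB : Summable fun i : ℕ => ∑' q : ℕ, bB (i + 1 + q) ^ 2 :=
      summable_tail ε hε bB (fun p => blk_nonneg h _) hb2B T hdecB
    set GA : ℕ → ℝ := fun i => ∑' q : ℕ, bA (i + 1 + q) ^ 2 with hGAdef
    set GB : ℕ → ℝ := fun i => ∑' q : ℕ, bB (i + 1 + q) ^ 2 with hGBdef
    have hGA0 : ∀ i, 0 ≤ GA i := fun i => tsum_nonneg fun q => sq_nonneg _
    have hGB0 : ∀ i, 0 ≤ GB i := fun i => tsum_nonneg fun q => sq_nonneg _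
    set CP : ℝ := ∑' i : ℕ, GA i with hCP
    set CP' : ℝ := ∑' i : ℕ, GB i with hCP'
    have hCP0 : 0 ≤ CP := tsum_nonneg hGA0
    have hCP'0 : 0 ≤ CP' := tsum_nonneg hGB0
    have key : ∀ n : ℕ, (∑ i : Fin n, ∑ j : Fin n,
        ‖gramToeplitz k h n i j - gramTrunc k h n i j‖ ^ 2)
        ≤ 2 * CP ^ 2 + 2 * CP' ^ 2 := by
      intro n
      have hsq : ∀ c : ℤ, Summable fun q : ℕ => blk h (c + q) ^ 2 := by
        intro c
        exact (summable_blksq h hsum').comp_injective fun x y hxy => by simpa using hxy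
      have hsq' : ∀ c : ℤ, Summable fun q : ℕ => blk h (c - q) ^ 2 := by
        intro c
        refine (summable_blksq h hsum').comp_injective fun x y hxy => ?_
        omega
      have eA : ∀ i : Fin n, (∑' q : ℕ, blk h (((i : ℤ) + 1) + q) ^ 2) = GA (i : ℕ) := by
        intro i
        refine tsum_congr fun q => ?_
        simp only [hGAdef, hbA]
        rw [show ((i : ℤ) + 1) + (q : ℤ) = (((i : ℕ) + 1 + q : ℕ) : ℤ) by push_cast; ring]
      have eB : ∀ i : Fin n, (∑' q : ℕ, blk h (((i : ℤ) - (n : ℤ)) - q) ^ 2)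
          = GB (n - 1 - (i : ℕ)) := by
        intro i
        refine tsum_congr fun q => ?_
        simp only [hGBdef, hbB]
        have hilt : (i : ℕ) < n := i.isLt
        rw [show ((i : ℤ) - (n : ℤ)) - (q : ℤ) = -(((n - 1 - (i : ℕ)) + 1 + q : ℕ) : ℤ) by omega]
      have hD2 : ∀ i j : Fin n,
          ‖gramToeplitz k h n i j - gramTrunc k h n i j‖ ^ 2
          ≤ 2 * (GA (i : ℕ) * GA (j : ℕ)) + 2 * (GB (n - 1 - (i : ℕ)) * GB (n - 1 - (j : ℕ))) := by
        intro i j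
        have hX : (∑' q : ℕ, blk h (((i : ℤ) + 1) + q) * blk h (((j : ℤ) + 1) + q))
            ≤ Real.sqrt (GA (i : ℕ)) * Real.sqrt (GA (j : ℕ)) := by
          have := tsum_cs (fun q => blk h (((i : ℤ) + 1) + q)) (fun q => blk h (((j : ℤ) + 1) + q))
            (fun q => blk_nonneg h _) (fun q => blk_nonneg h _) (hsq _) (hsq _)
          rwa [eA i, eA j] at this
        have hY : (∑' q : ℕ, blk h (((i : ℤ) - (n : ℤ)) - q) * blk h (((j : ℤ) - (n : ℤ)) - q))
            ≤ Real.sqrt (GB (n - 1 - (i : ℕ))) * Real.sqrt (GB (n - 1 - (j : ℕ))) := by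
          have := tsum_cs (fun q => blk h (((i : ℤ) - (n : ℤ)) - q))
            (fun q => blk h (((j : ℤ) - (n : ℤ)) - q))
            (fun q => blk_nonneg h _) (fun q => blk_nonneg h _) (hsq' _) (hsq' _)
          rwa [eB i, eB j] at this
        have hD := (norm_diff_le h hsum' n i j).trans (add_le_add hX hY)
        have h1 : ‖gramToeplitz k h n i j - gramTrunc k h n i j‖ ^ 2
            ≤ (Real.sqrt (GA (i : ℕ)) * Real.sqrt (GA (j : ℕ))
              + Real.sqrt (GB (n - 1 - (i : ℕ))) * Real.sqrt (GB (n - 1 - (j : ℕ)))) ^ 2 :=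
          pow_le_pow_left₀ (norm_nonneg _) hD 2
        refine h1.trans ?_
        have e1 : (Real.sqrt (GA (i : ℕ)) * Real.sqrt (GA (j : ℕ))) ^ 2
            = GA (i : ℕ) * GA (j : ℕ) := by
          rw [mul_pow, Real.sq_sqrt (hGA0 _), Real.sq_sqrt (hGA0 _)]
        have e2 : (Real.sqrt (GB (n - 1 - (i : ℕ))) * Real.sqrt (GB (n - 1 - (j : ℕ)))) ^ 2
            = GB (n - 1 - (i : ℕ)) * GB (n - 1 - (j : ℕ)) := by
          rw [mul_pow, Real.sq_sqrt (hGB0 _), Real.sq_sqrt (hGB0 _)]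
        nlinarith [sq_nonneg (Real.sqrt (GA (i : ℕ)) * Real.sqrt (GA (j : ℕ))
          - Real.sqrt (GB (n - 1 - (i : ℕ))) * Real.sqrt (GB (n - 1 - (j : ℕ))))]
      have hsumGA : ∑ i : Fin n, GA (i : ℕ) ≤ CP := by
        rw [Fin.sum_univ_eq_sum_range GA n]
        exact hGA.sum_le_tsum _ (fun i _ => hGA0 i)
      have hsumGB : ∑ i : Fin n, GB (n - 1 - (i : ℕ)) ≤ CP' := by
        rw [Fin.sum_univ_eq_sum_range (fun i => GB (n - 1 - i)) n,
          Finset.sum_range_reflect GB n]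
        exact hGB.sum_le_tsum _ (fun i _ => hGB0 i)
      calc (∑ i : Fin n, ∑ j : Fin n,
            ‖gramToeplitz k h n i j - gramTrunc k h n i j‖ ^ 2)
          ≤ ∑ i : Fin n, ∑ j : Fin n,
            (2 * (GA (i : ℕ) * GA (j : ℕ))
              + 2 * (GB (n - 1 - (i : ℕ)) * GB (n - 1 - (j : ℕ)))) :=
            Finset.sum_le_sum fun i _ => Finset.sum_le_sum fun j _ => hD2 i j
        _ = 2 * (∑ i : Fin n, GA (i : ℕ)) ^ 2 + 2 * (∑ i : Fin n, GB (n - 1 - (i : ℕ))) ^ 2 :=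
            double_sum_eq _ _
        _ ≤ 2 * CP ^ 2 + 2 * CP' ^ 2 := by
            have hnn1 : (0 : ℝ) ≤ ∑ i : Fin n, GA (i : ℕ) :=
              Finset.sum_nonneg fun i _ => hGA0 _
            have hnn2 : (0 : ℝ) ≤ ∑ i : Fin n, GB (n - 1 - (i : ℕ)) :=
              Finset.sum_nonneg fun i _ => hGB0 _
            have := pow_le_pow_left₀ hnn1 hsumGA 2
            have := pow_le_pow_left₀ hnn2 hsumGB 2
            linarith
    refine squeeze_zero (fun n => ?_) (fun n => ?_)
      (tendsto_const_div_atTop_nhds_zero_nat (2 * CP ^ 2 + 2 * CP' ^ 2))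
    · refine mul_nonneg (by positivity) ?_
      exact Finset.sum_nonneg fun i _ => Finset.sum_nonneg fun j _ => sq_nonneg _
    · have h1 := key n
      have h2 : (0 : ℝ) ≤ 1 / (n : ℝ) := by positivity
      calc (1 / (n : ℝ)) * ∑ i : Fin n, ∑ j : Fin n,
            ‖gramToeplitz k h n i j - gramTrunc k h n i j‖ ^ 2
          ≤ (1 / (n : ℝ)) * (2 * CP ^ 2 + 2 * CP' ^ 2) := mul_le_mul_of_nonneg_left h1 h2
        _ = (2 * CP ^ 2 + 2 * CP' ^ 2) / (n : ℝ) := by ring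
  · -- part (ii)
    refine ⟨(∑' i, blk h i) ^ 2, fun n => ⟨?_, ?_⟩⟩
    · exact schur_test (gramTrunc k h n) (cT h) (cT_nonneg h)
        (fun i j => norm_gramTrunc_le h hsum' n i j) _ (sq_nonneg _)
        (fun i => fin_sum_cT_row h hsum' n i) (fun j => fin_sum_cT_col h hsum' n j)
    · exact schur_test (gramToeplitz k h n) (cT h) (cT_nonneg h)
        (fun i j => norm_gramToeplitz_le h hsum' n i j) _ (sq_nonneg _)
        (fun i => fin_sum_cT_row h hsum' n i) (fun j => fin_sum_cT_col h hsum' n j)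
end

section
/- Asymptotic equivalence is preserved under matrix inversion with uniformly bounded inverses: For each n : ℕ let A_n, B_n : Matrix (Fin n) (Fin n) ℂ be invertible matrices, and suppose there exists K such that for all n the ℓ²-operator norms of (A_n)⁻¹ and (B_n)⁻¹ are at most K. If (1/√n) · ‖A_n − B_n‖_F → 0 as n → ∞, where ‖·‖_F denotes the Frobenius norm, then (1/√n) · ‖(A_n)⁻¹ − (B_n)⁻¹‖_F → 0 as n → ∞. -/
open scoped Matrix

/-- The Frobenius norm of a complex square matrix. -/
noncomputable def frobNorm {n : ℕ} (X : Matrix (Fin n) (Fin n) ℂ) : ℝ :=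
  Real.sqrt (∑ i : Fin n, ∑ j : Fin n, ‖X i j‖ ^ 2)

lemma frobNorm_nonneg {n : ℕ} (X : Matrix (Fin n) (Fin n) ℂ) : 0 ≤ frobNorm X :=
  Real.sqrt_nonneg _

lemma frobNorm_conjTranspose {n : ℕ} (X : Matrix (Fin n) (Fin n) ℂ) :
    frobNorm Xᴴ = frobNorm X := by
  unfold frobNorm
  rw [Finset.sum_comm]
  simp [Matrix.conjTranspose_apply]

lemma frobNorm_neg {n : ℕ} (X : Matrix (Fin n) (Fin n) ℂ) :
    frobNorm (-X) = frobNorm X := by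
  simp [frobNorm]

lemma frob_mul_le_left {n : ℕ} (M X : Matrix (Fin n) (Fin n) ℂ) :
    frobNorm (M * X) ≤ ‖Matrix.toEuclideanCLM (𝕜 := ℂ) M‖ * frobNorm X := by
  set op := ‖Matrix.toEuclideanCLM (𝕜 := ℂ) M‖ with hop_def
  have hop : 0 ≤ op := norm_nonneg _
  have key : ∀ j : Fin n, ∑ i : Fin n, ‖(M * X) i j‖ ^ 2 ≤
      op ^ 2 * ∑ i : Fin n, ‖X i j‖ ^ 2 := by
    intro j
    set v : EuclideanSpace ℂ (Fin n) := (WithLp.equiv 2 _).symm (fun i => X i j) with hv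
    have hvnorm : ‖v‖ ^ 2 = ∑ i : Fin n, ‖X i j‖ ^ 2 := by
      rw [EuclideanSpace.norm_eq, Real.sq_sqrt (by positivity)]
      rfl
    have himg : Matrix.toEuclideanCLM (𝕜 := ℂ) M v =
        (WithLp.equiv 2 _).symm (fun i => (M * X) i j) := by
      rw [hv, WithLp.equiv_symm_apply, Matrix.toEuclideanCLM_toLp]
      congr 1
    have hmnorm : ‖Matrix.toEuclideanCLM (𝕜 := ℂ) M v‖ ^ 2 =
        ∑ i : Fin n, ‖(M * X) i j‖ ^ 2 := by
      rw [himg, EuclideanSpace.norm_eq, Real.sq_sqrt (by positivity)]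
      rfl
    have hle : ‖Matrix.toEuclideanCLM (𝕜 := ℂ) M v‖ ≤ op * ‖v‖ :=
      (Matrix.toEuclideanCLM (𝕜 := ℂ) M).le_opNorm v
    calc ∑ i : Fin n, ‖(M * X) i j‖ ^ 2
        = ‖Matrix.toEuclideanCLM (𝕜 := ℂ) M v‖ ^ 2 := hmnorm.symm
      _ ≤ (op * ‖v‖) ^ 2 := by
          apply pow_le_pow_left₀ (norm_nonneg _) hle
      _ = op ^ 2 * ∑ i : Fin n, ‖X i j‖ ^ 2 := by rw [mul_pow, hvnorm]
  unfold frobNorm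
  rw [Finset.sum_comm, Finset.sum_comm (f := fun i j => ‖X i j‖ ^ 2)]
  calc Real.sqrt (∑ j : Fin n, ∑ i : Fin n, ‖(M * X) i j‖ ^ 2)
      ≤ Real.sqrt (∑ j : Fin n, op ^ 2 * ∑ i : Fin n, ‖X i j‖ ^ 2) := by
        apply Real.sqrt_le_sqrt
        exact Finset.sum_le_sum fun j _ => key j
    _ = op * Real.sqrt (∑ j : Fin n, ∑ i : Fin n, ‖X i j‖ ^ 2) := by
        rw [← Finset.mul_sum, Real.sqrt_mul (by positivity), Real.sqrt_sq hop]

set_option synthInstance.maxHeartbeats 1000000 in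
lemma frob_mul_le_right {n : ℕ} (X M : Matrix (Fin n) (Fin n) ℂ) :
    frobNorm (X * M) ≤ ‖Matrix.toEuclideanCLM (𝕜 := ℂ) M‖ * frobNorm X := by
  have hstar : ‖Matrix.toEuclideanCLM (𝕜 := ℂ) Mᴴ‖ =
      ‖Matrix.toEuclideanCLM (𝕜 := ℂ) M‖ := by
    have : (Mᴴ : Matrix (Fin n) (Fin n) ℂ) = star M := rfl
    rw [this, map_star, ContinuousLinearMap.star_eq_adjoint]
    exact ContinuousLinearMap.adjoint.norm_map _
  calc frobNorm (X * M) = frobNorm ((X * M)ᴴ) := (frobNorm_conjTranspose _).symm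
    _ = frobNorm (Mᴴ * Xᴴ) := by rw [Matrix.conjTranspose_mul]
    _ ≤ ‖Matrix.toEuclideanCLM (𝕜 := ℂ) Mᴴ‖ * frobNorm Xᴴ := frob_mul_le_left _ _
    _ = ‖Matrix.toEuclideanCLM (𝕜 := ℂ) M‖ * frobNorm X := by
        rw [hstar, frobNorm_conjTranspose]

/-- Asymptotic equivalence is preserved under matrix inversion with uniformly
bounded inverses: if the inverses of `A n` and `B n` have ℓ²-operator norms
bounded by `K` uniformly in `n`, and `(1/√n)‖A n − B n‖_F → 0`, then
`(1/√n)‖(A n)⁻¹ − (B n)⁻¹‖_F → 0`. -/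
theorem asymptotic_equivalence_of_inverses
    (A B : (n : ℕ) → Matrix (Fin n) (Fin n) ℂ)
    (hAinv : ∀ n, IsUnit (A n).det) (hBinv : ∀ n, IsUnit (B n).det)
    (K : ℝ)
    (hAbd : ∀ n, ‖Matrix.toEuclideanCLM (𝕜 := ℂ) ((A n)⁻¹)‖ ≤ K)
    (hBbd : ∀ n, ‖Matrix.toEuclideanCLM (𝕜 := ℂ) ((B n)⁻¹)‖ ≤ K)
    (hfro : Filter.Tendsto
      (fun n : ℕ => (1 / Real.sqrt n) * frobNorm (A n - B n))
      Filter.atTop (nhds 0)) :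
    Filter.Tendsto
      (fun n : ℕ => (1 / Real.sqrt n) * frobNorm ((A n)⁻¹ - (B n)⁻¹))
      Filter.atTop (nhds 0) := by
  have hK0 : 0 ≤ K := le_trans (norm_nonneg _) (hAbd 0)
  -- identity : A⁻¹ - B⁻¹ = A⁻¹ * (B - A) * B⁻¹
  have hid : ∀ n, (A n)⁻¹ - (B n)⁻¹ = (A n)⁻¹ * ((B n - A n) * (B n)⁻¹) := by
    intro n
    rw [Matrix.sub_mul, Matrix.mul_nonsing_inv _ (hBinv n), Matrix.mul_sub,
      Matrix.mul_one, ← Matrix.mul_assoc, Matrix.nonsing_inv_mul _ (hAinv n),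
      Matrix.one_mul]
  have hbound : ∀ n, frobNorm ((A n)⁻¹ - (B n)⁻¹) ≤ K * K * frobNorm (A n - B n) := by
    intro n
    rw [hid n]
    calc frobNorm ((A n)⁻¹ * ((B n - A n) * (B n)⁻¹))
        ≤ ‖Matrix.toEuclideanCLM (𝕜 := ℂ) ((A n)⁻¹)‖ *
            frobNorm ((B n - A n) * (B n)⁻¹) := frob_mul_le_left _ _
      _ ≤ K * frobNorm ((B n - A n) * (B n)⁻¹) := by
          apply mul_le_mul_of_nonneg_right (hAbd n) (frobNorm_nonneg _)
      _ ≤ K * (‖Matrix.toEuclideanCLM (𝕜 := ℂ) ((B n)⁻¹)‖ * frobNorm (B n - A n)) := by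
          apply mul_le_mul_of_nonneg_left (frob_mul_le_right _ _) hK0
      _ ≤ K * (K * frobNorm (B n - A n)) := by
          apply mul_le_mul_of_nonneg_left
            (mul_le_mul_of_nonneg_right (hBbd n) (frobNorm_nonneg _)) hK0
      _ = K * K * frobNorm (A n - B n) := by
          rw [show B n - A n = -(A n - B n) from (neg_sub _ _).symm, frobNorm_neg]; ring
  have hlim : Filter.Tendsto
      (fun n : ℕ => K * K * ((1 / Real.sqrt n) * frobNorm (A n - B n)))
      Filter.atTop (nhds 0) := by
    have := hfro.const_mul (K * K)
    simpa using this
  apply squeeze_zero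
  · intro n
    exact mul_nonneg (by positivity) (frobNorm_nonneg _)
  · intro n
    calc (1 / Real.sqrt n) * frobNorm ((A n)⁻¹ - (B n)⁻¹)
        ≤ (1 / Real.sqrt n) * (K * K * frobNorm (A n - B n)) := by
          apply mul_le_mul_of_nonneg_left (hbound n) (by positivity)
      _ = K * K * ((1 / Real.sqrt n) * frobNorm (A n - B n)) := by ring
  · exact hlim
end
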